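/- arXiv:1609.08844 — 9 statements merged into one kernel-verified Lean document; each statement's English description precedes it below -/
import Mathlib

section
/- If A ⊆ ℝ^n is monovex and R ⊆ ℝ^n is an open box whose faces are parallel to the axes (i.e., R = ∏_{i=1}^n (a_i, b_i)), then the Minkowski sum A + R = {a + r : a ∈ A, r ∈ R} is monovex. -/
open Pointwise

/-- A set `A` in `ℝ^ι` is monovex if any two of its points are connected by a
continuous path inside `A`, each of whose coordinate functions is monotone. -/
def Monovex {ι : Type*} (A : Set (ι → ℝ)) : Prop :=
  ∀ x ∈ A, ∀ y ∈ A, ∃ γ : unitInterval → ι → ℝ,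
    Continuous γ ∧ γ 0 = x ∧ γ 1 = y ∧ (∀ t, γ t ∈ A) ∧
    ∀ i, Monotone (fun t => γ t i) ∨ Antitone (fun t => γ t i)

lemma keyMono (g : unitInterval → ℝ) (hg : Continuous g) (hm : Monotone g)
    (a b r s : ℝ) (hr : r ∈ Set.Ioo a b) (hs : s ∈ Set.Ioo a b) :
    ∃ δ : unitInterval → ℝ, Continuous δ ∧ δ 0 = g 0 + r ∧ δ 1 = g 1 + s ∧
      (∀ t, δ t - g t ∈ Set.Ioo a b) ∧ (Monotone δ ∨ Antitone δ) := by
  have hD : g 0 ≤ g 1 := hm (show (0 : unitInterval) ≤ 1 from zero_le_one)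
  have hbound : ∀ t : unitInterval, g 0 ≤ g t ∧ g t ≤ g 1 := by
    intro t
    exact ⟨hm (show (0 : unitInterval) ≤ t from t.2.1),
      hm (show t ≤ (1 : unitInterval) from t.2.2)⟩
  have ht01 : ∀ t : unitInterval, (0:ℝ) ≤ (t:ℝ) ∧ (t:ℝ) ≤ 1 := fun t => ⟨t.2.1, t.2.2⟩
  by_cases h1 : r ≤ s
  · refine ⟨fun t => g t + (r + (s - r) * (t : ℝ)), ?_, by simp, by simp, ?_, Or.inl ?_⟩
    · exact hg.add (continuous_const.add (continuous_const.mul continuous_subtype_val))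
    · intro t
      obtain ⟨h0, h1'⟩ := ht01 t
      constructor
      · have : 0 ≤ (s - r) * (t : ℝ) := mul_nonneg (by linarith) h0
        have := hr.1; simp only [add_sub_cancel_left]; linarith
      · have : (s - r) * (t : ℝ) ≤ (s - r) * 1 :=
          mul_le_mul_of_nonneg_left h1' (by linarith)
        have := hs.2; simp only [add_sub_cancel_left]; linarith
    · intro t u htu
      have h1 : g t ≤ g u := hm htu
      have h2 : (t : ℝ) ≤ (u : ℝ) := htu
      have : (s - r) * (t : ℝ) ≤ (s - r) * (u : ℝ) :=
        mul_le_mul_of_nonneg_left h2 (by linarith)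
      simp only; linarith
  · have hsr : s < r := not_le.1 h1
    by_cases h2 : r - s ≤ g 1 - g 0
    · have hD0 : 0 < g 1 - g 0 := lt_of_lt_of_le (by linarith) h2
      set μ : ℝ := 1 - (r - s) / (g 1 - g 0) with hμdef
      have hμ0 : 0 ≤ μ := by
        have : (r - s) / (g 1 - g 0) ≤ 1 := (div_le_one hD0).2 h2
        simp only [hμdef]; linarith
      have hμ1 : μ ≤ 1 := by
        have : 0 ≤ (r - s) / (g 1 - g 0) := div_nonneg (by linarith) (by linarith)
        simp only [hμdef]; linarith
      have hμD : μ * (g 1 - g 0) = (g 1 - g 0) - (r - s) := by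
        rw [hμdef, sub_mul, one_mul, div_mul_cancel₀ _ (ne_of_gt hD0)]
      refine ⟨fun t => μ * (g t - g 0) + (g 0 + r), ?_, by simp, ?_, ?_, Or.inl ?_⟩
      · exact (continuous_const.mul (hg.sub continuous_const)).add continuous_const
      · simp only; linarith
      · intro t
        obtain ⟨hl, hu⟩ := hbound t
        have key1 : (μ - 1) * (g 1 - g 0) ≤ (μ - 1) * (g t - g 0) :=
          mul_le_mul_of_nonpos_left (by linarith) (by linarith)
        have key2 : (μ - 1) * (g t - g 0) ≤ 0 :=
          mul_nonpos_of_nonpos_of_nonneg (by linarith) (by linarith)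
        have key3 : (μ - 1) * (g 1 - g 0) = -(r - s) := by linear_combination hμD
        constructor
        · show a < μ * (g t - g 0) + (g 0 + r) - g t
          nlinarith [hs.1, key1, key3]
        · show μ * (g t - g 0) + (g 0 + r) - g t < b
          nlinarith [hr.2, key2]
      · intro t u htu
        have : g t ≤ g u := hm htu
        have : μ * (g t - g 0) ≤ μ * (g u - g 0) :=
          mul_le_mul_of_nonneg_left (by linarith) hμ0
        simp only; linarith
    · set k : ℝ := (g 1 - g 0) + s - r with hkdef
      have hk0 : k < 0 := by simp only [hkdef]; linarith [not_le.1 h2]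
      refine ⟨fun t => k * (t : ℝ) + (g 0 + r), ?_, by simp, ?_, ?_, Or.inr ?_⟩
      · exact (continuous_const.mul continuous_subtype_val).add continuous_const
      · simp only [Set.Icc.coe_one]; simp only [hkdef]; ring
      · intro t
        obtain ⟨hl, hu⟩ := hbound t
        obtain ⟨h0, h1'⟩ := ht01 t
        have key1 : k * 1 ≤ k * (t : ℝ) := mul_le_mul_of_nonpos_left h1' (le_of_lt hk0)
        have key2 : k * (t : ℝ) ≤ 0 := mul_nonpos_of_nonpos_of_nonneg (le_of_lt hk0) h0
        constructor
        · show a < k * (t : ℝ) + (g 0 + r) - g t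
          simp only [hkdef] at key1 ⊢; nlinarith [hs.1]
        · show k * (t : ℝ) + (g 0 + r) - g t < b
          linarith [hr.2, key2, hl]
      · intro t u htu
        have h2' : (t : ℝ) ≤ (u : ℝ) := htu
        have : k * (u : ℝ) ≤ k * (t : ℝ) := mul_le_mul_of_nonpos_left h2' (le_of_lt hk0)
        simp only; linarith

lemma key (g : unitInterval → ℝ) (hg : Continuous g)
    (hmono : Monotone g ∨ Antitone g)
    (a b r s : ℝ) (hr : r ∈ Set.Ioo a b) (hs : s ∈ Set.Ioo a b) :
    ∃ δ : unitInterval → ℝ, Continuous δ ∧ δ 0 = g 0 + r ∧ δ 1 = g 1 + s ∧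
      (∀ t, δ t - g t ∈ Set.Ioo a b) ∧ (Monotone δ ∨ Antitone δ) := by
  rcases hmono with hm | hm
  · exact keyMono g hg hm a b r s hr hs
  · obtain ⟨δ', hc, h0, h1, hmem, hmon⟩ :=
      keyMono (fun t => -(g t)) hg.neg (fun t u htu => by simpa using hm htu)
        (-b) (-a) (-r) (-s) ⟨by linarith [hr.2], by linarith [hr.1]⟩
        ⟨by linarith [hs.2], by linarith [hs.1]⟩
    refine ⟨fun t => -(δ' t), hc.neg, by simp only at h0 ⊢; linarith,
      by simp only at h1 ⊢; linarith, ?_, ?_⟩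
    · intro t
      obtain ⟨hl, hu⟩ := hmem t
      simp only at hl hu ⊢
      constructor <;> [linarith; linarith]
    · rcases hmon with h | h
      · exact Or.inr (fun t u htu => by simpa using h htu)
      · exact Or.inl (fun t u htu => by simpa using h htu)

theorem monovex_add_open_box {n : ℕ} (A : Set (Fin n → ℝ)) (hA : Monovex A)
    (a b : Fin n → ℝ) :
    Monovex (A + Set.pi Set.univ fun i => Set.Ioo (a i) (b i)) := by
  intro x hx y hy
  rw [Set.mem_add] at hx hy
  obtain ⟨p, hp, u, hu, rfl⟩ := hx
  obtain ⟨q, hq, v, hv, rfl⟩ := hy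
  obtain ⟨γ, hγc, hγ0, hγ1, hγA, hγm⟩ := hA p hp q hq
  choose δ hδc hδ0 hδ1 hδmem hδmon using fun i =>
    key (fun t => γ t i) ((continuous_apply i).comp hγc) (hγm i)
      (a i) (b i) (u i) (v i) (hu i (Set.mem_univ i)) (hv i (Set.mem_univ i))
  refine ⟨fun t i => δ i t, continuous_pi hδc, ?_, ?_, ?_, fun i => hδmon i⟩
  · funext i
    show δ i 0 = (p + u) i
    rw [hδ0 i, hγ0]
    rfl
  · funext i
    show δ i 1 = (q + v) i
    rw [hδ1 i, hγ1]
    rfl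
  · intro t
    rw [Set.mem_add]
    refine ⟨γ t, hγA t, fun i => δ i t - γ t i, fun i _ => hδmem i t, ?_⟩
    funext i
    simp [Pi.add_apply]
end

section
/- If A ⊆ ℝ^n is monovex and R ⊆ ℝ^n is a closed box whose faces are parallel to the axes (i.e., R = ∏_{i=1}^n [a_i, b_i] with a_i ≤ b_i), then the Minkowski sum A + R is monovex. -/
open Pointwise

/-- 1-D building block for the monotone case. -/
lemma oneDim_mono (g : unitInterval → ℝ) (hg : Continuous g) (hm : Monotone g)
    (p q : ℝ) :
    ∃ σ : unitInterval → ℝ, Continuous σ ∧ σ 0 = p ∧ σ 1 = q ∧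
      (∀ t, σ t ∈ Set.Icc (min p q) (max p q)) ∧
      (Monotone (fun t => g t + σ t) ∨ Antitone (fun t => g t + σ t)) := by
  have h01 : g 0 ≤ g 1 := hm (by exact unitInterval.nonneg') -- 0 ≤ 1
  rcases le_or_gt p q with hpq | hpq
  · -- linear path
    refine ⟨fun t => p + (t : ℝ) * (q - p), ?_, by simp, by simp, ?_, Or.inl ?_⟩
    · exact continuous_const.add (continuous_subtype_val.mul continuous_const)
    · intro t
      have ht0 : (0:ℝ) ≤ t := t.2.1
      have ht1 : (t:ℝ) ≤ 1 := t.2.2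
      constructor
      · have : p ≤ p + (t:ℝ) * (q - p) := by nlinarith
        exact le_trans (min_le_left _ _) this
      · have : p + (t:ℝ) * (q - p) ≤ q := by nlinarith
        exact le_trans this (le_max_right _ _)
    · intro s t hst
      have hst' : (s:ℝ) ≤ t := hst
      have := hm hst
      have : p + (s:ℝ) * (q - p) ≤ p + (t:ℝ) * (q - p) := by nlinarith
      dsimp only
      linarith [hm hst]
  · rcases le_or_gt (g 0 + p) (g 1 + q) with hd | hd
    · -- q < p, total change nonnegative: monotone sum
      refine ⟨fun t => max (g t + q) (g 0 + p) - g t, ?_, ?_, ?_, ?_, Or.inl ?_⟩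
      · exact ((hg.add continuous_const).max continuous_const).sub hg
      · simp; rw [max_eq_right (by linarith)]; ring
      · simp; rw [max_eq_left (by linarith)]; ring
      · intro t
        have h0t : g 0 ≤ g t := hm t.2.1
        constructor
        · have : q ≤ max (g t + q) (g 0 + p) - g t := by
            have := le_max_left (g t + q) (g 0 + p); linarith
          exact le_trans (min_le_right _ _) this
        · have : max (g t + q) (g 0 + p) - g t ≤ p := by
            have h1 : g t + q ≤ g t + p := by linarith
            have h2 : g 0 + p ≤ g t + p := by linarith
            have := max_le h1 h2; linarith
          exact le_trans this (le_max_left _ _)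
      · have : (fun t => g t + (max (g t + q) (g 0 + p) - g t)) =
            fun t => max (g t + q) (g 0 + p) := by funext t; ring
        intro s t hst
        dsimp only
        have h1 : g s + (max (g s + q) (g 0 + p) - g s) = max (g s + q) (g 0 + p) := by ring
        have h2 : g t + (max (g t + q) (g 0 + p) - g t) = max (g t + q) (g 0 + p) := by ring
        rw [h1, h2]
        exact max_le_max (by linarith [hm hst]) le_rfl
    · -- q < p, total change negative: antitone sum
      refine ⟨fun t => min (g 0 + p) (g 1 + q + (1 - (t:ℝ)) * (p - q)) - g t,
        ?_, ?_, ?_, ?_, Or.inr ?_⟩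
      · exact (continuous_const.min (continuous_const.add
          ((continuous_const.sub continuous_subtype_val).mul continuous_const))).sub hg
      · simp; rw [min_eq_left (by linarith)]; ring
      · simp; rw [min_eq_right (by linarith)]; ring
      · intro t
        have h0t : g 0 ≤ g t := hm t.2.1
        have ht1 : g t ≤ g 1 := hm t.2.2
        have htn : (0:ℝ) ≤ 1 - (t:ℝ) := by linarith [t.2.2]
        have hnn : (0:ℝ) ≤ (1 - (t:ℝ)) * (p - q) := by nlinarith
        constructor
        · have h1 : q ≤ g 0 + p - g t := by linarith
          have h2 : q ≤ g 1 + q + (1 - (t:ℝ)) * (p - q) - g t := by linarith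
          have := le_min h1 h2
          have hmin : min (g 0 + p) (g 1 + q + (1 - (t:ℝ)) * (p - q)) - g t =
              min (g 0 + p - g t) (g 1 + q + (1 - (t:ℝ)) * (p - q) - g t) := by
            rw [min_sub_sub_right]
          show p ⊓ q ≤ min (g 0 + p) (g 1 + q + (1 - (t:ℝ)) * (p - q)) - g t
          rw [hmin]
          exact le_trans (min_le_right _ _) this
        · have : min (g 0 + p) (g 1 + q + (1 - (t:ℝ)) * (p - q)) - g t ≤ p := by
            have := min_le_left (g 0 + p) (g 1 + q + (1 - (t:ℝ)) * (p - q))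
            linarith
          exact le_trans this (le_max_left _ _)
      · intro s t hst
        dsimp only
        have h1 : ∀ u : unitInterval, g u + (min (g 0 + p)
            (g 1 + q + (1 - (u:ℝ)) * (p - q)) - g u) =
            min (g 0 + p) (g 1 + q + (1 - (u:ℝ)) * (p - q)) := by intro u; ring
        rw [h1, h1]
        have hst' : (s:ℝ) ≤ t := hst
        exact min_le_min le_rfl (by nlinarith)

/-- 1-D building block, monotone or antitone case. -/
lemma oneDim (g : unitInterval → ℝ) (hg : Continuous g)
    (hm : Monotone g ∨ Antitone g) (p q : ℝ) :
    ∃ σ : unitInterval → ℝ, Continuous σ ∧ σ 0 = p ∧ σ 1 = q ∧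
      (∀ t, σ t ∈ Set.Icc (min p q) (max p q)) ∧
      (Monotone (fun t => g t + σ t) ∨ Antitone (fun t => g t + σ t)) := by
  rcases hm with hm | hm
  · exact oneDim_mono g hg hm p q
  · obtain ⟨σ', hc, h0, h1, hb, hsum⟩ :=
      oneDim_mono (fun t => -g t) (hg.neg) (fun s t hst => by
        dsimp only; linarith [hm hst]) (-p) (-q)
    refine ⟨fun t => -σ' t, hc.neg, by show -σ' 0 = p; rw [h0]; ring,
      by show -σ' 1 = q; rw [h1]; ring, ?_, ?_⟩
    · intro t
      obtain ⟨hl, hr⟩ := hb t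
      rw [min_neg_neg] at hl
      rw [max_neg_neg] at hr
      constructor
      · show p ⊓ q ≤ -σ' t; linarith
      · show -σ' t ≤ p ⊔ q; linarith
    · rcases hsum with h | h
      · refine Or.inr fun s t hst => ?_
        have := h hst; dsimp only at this ⊢; linarith
      · refine Or.inl fun s t hst => ?_
        have := h hst; dsimp only at this ⊢; linarith

theorem monovex_add_closed_box {n : ℕ} (A : Set (Fin n → ℝ)) (hA : Monovex A)
    (a b : Fin n → ℝ) (hab : ∀ i, a i ≤ b i) :
    Monovex (A + Set.pi Set.univ fun i => Set.Icc (a i) (b i)) := by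
  rintro x hx y hy
  rw [Set.mem_add] at hx hy
  obtain ⟨u, hu, r, hr, hur⟩ := hx
  obtain ⟨v, hv, s, hs, hvs⟩ := hy
  obtain ⟨γ, hγc, hγ0, hγ1, hγA, hγm⟩ := hA u hu v hv
  have key : ∀ i : Fin n, ∃ σ : unitInterval → ℝ, Continuous σ ∧ σ 0 = r i ∧
      σ 1 = s i ∧ (∀ t, σ t ∈ Set.Icc (min (r i) (s i)) (max (r i) (s i))) ∧
      (Monotone (fun t => γ t i + σ t) ∨ Antitone (fun t => γ t i + σ t)) := by
    intro i
    exact oneDim (fun t => γ t i) ((continuous_apply i).comp hγc) (hγm i) (r i) (s i)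
  choose σ hσc hσ0 hσ1 hσb hσm using key
  refine ⟨fun t i => γ t i + σ i t, ?_, ?_, ?_, ?_, ?_⟩
  · exact continuous_pi fun i => ((continuous_apply i).comp hγc).add (hσc i)
  · funext i; show γ 0 i + σ i 0 = x i; rw [hσ0 i, hγ0, ← hur]; simp [Pi.add_apply]
  · funext i; show γ 1 i + σ i 1 = y i; rw [hσ1 i, hγ1, ← hvs]; simp [Pi.add_apply]
  · intro t
    rw [Set.mem_add]
    refine ⟨γ t, hγA t, fun i => σ i t, ?_, by funext i; simp⟩
    intro i _
    obtain ⟨hl, hr'⟩ := hσb i t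
    have hra := (hr i (Set.mem_univ i)).1
    have hrb := (hr i (Set.mem_univ i)).2
    have hsa := (hs i (Set.mem_univ i)).1
    have hsb := (hs i (Set.mem_univ i)).2
    exact ⟨le_trans (le_min hra hsa) hl, le_trans hr' (max_le hrb hsb)⟩
  · exact hσm
end

section
/- Let A ⊆ ℝ^3 be the union of the two line segments [(0,0,0),(0,1,1)] and [(0,1,1),(1,1,2)], and let B ⊆ ℝ^3 be the line segment [(0,0,0),(-1,-1,2)]. Then the Minkowski sum A + B is not monovex. In particular, the Minkowski sum of a monovex set and a convex set need not be monovex. -/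
open Pointwise

lemma const_of_mono_or_anti {f : unitInterval → ℝ} {c : ℝ}
    (h : Monotone f ∨ Antitone f) (h0 : f 0 = c) (h1 : f 1 = c) (t : unitInterval) :
    f t = c := by
  rcases h with h | h
  · exact le_antisymm (h1 ▸ h unitInterval.le_one') (h0 ▸ h unitInterval.nonneg')
  · exact le_antisymm (h0 ▸ h unitInterval.nonneg') (h1 ▸ h unitInterval.le_one')

theorem minkowski_sum_not_monovex :
    ¬ Monovex ((segment ℝ (![0,0,0] : Fin 3 → ℝ) ![0,1,1] ∪
        segment ℝ (![0,1,1] : Fin 3 → ℝ) ![1,1,2]) +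
      segment ℝ (![0,0,0] : Fin 3 → ℝ) ![-1,-1,2]) := by
  intro h
  have hx : (![0,0,0] + ![0,0,0] : Fin 3 → ℝ) ∈
      ((segment ℝ (![0,0,0] : Fin 3 → ℝ) ![0,1,1] ∪
        segment ℝ (![0,1,1] : Fin 3 → ℝ) ![1,1,2]) +
      segment ℝ (![0,0,0] : Fin 3 → ℝ) ![-1,-1,2]) :=
    Set.add_mem_add (Or.inl (left_mem_segment ℝ _ _)) (left_mem_segment ℝ _ _)
  have hy : (![1,1,2] + ![-1,-1,2] : Fin 3 → ℝ) ∈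
      ((segment ℝ (![0,0,0] : Fin 3 → ℝ) ![0,1,1] ∪
        segment ℝ (![0,1,1] : Fin 3 → ℝ) ![1,1,2]) +
      segment ℝ (![0,0,0] : Fin 3 → ℝ) ![-1,-1,2]) :=
    Set.add_mem_add (Or.inr (right_mem_segment ℝ _ _)) (right_mem_segment ℝ _ _)
  obtain ⟨γ, hc, h0, h1, hmem, hmono⟩ := h _ hx _ hy
  have e00 : γ 0 0 = 0 := by rw [h0]; norm_num
  have e01 : γ 0 1 = 0 := by rw [h0]; norm_num
  have e02 : γ 0 2 = 0 := by rw [h0]; norm_num [Matrix.cons_val_two, Matrix.tail_cons, Matrix.head_cons]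
  have e10 : γ 1 0 = 0 := by rw [h1]; norm_num
  have e11 : γ 1 1 = 0 := by rw [h1]; norm_num
  have e12 : γ 1 2 = 4 := by rw [h1]; norm_num [Matrix.cons_val_two, Matrix.tail_cons, Matrix.head_cons]
  have hcont : Continuous (fun t => γ t 2) := (continuous_apply (2 : Fin 3)).comp hc
  have h2 : (2 : ℝ) ∈ Set.range (fun t => γ t 2) := by
    apply intermediate_value_univ (0 : unitInterval) 1 hcont
    simp only [e02, e12]
    constructor <;> norm_num
  obtain ⟨t, ht⟩ := h2
  have c0 : γ t 0 = 0 := const_of_mono_or_anti (hmono 0) e00 e10 t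
  have c1 : γ t 1 = 0 := const_of_mono_or_anti (hmono 1) e01 e11 t
  have hm := hmem t
  rw [Set.mem_add] at hm
  obtain ⟨a, ha, b, hb, hab⟩ := hm
  rw [segment_eq_image] at hb
  obtain ⟨u, hu, rfl⟩ := hb
  rcases ha with ha | ha
  · rw [segment_eq_image] at ha
    obtain ⟨s, hs, rfl⟩ := ha
    have q0 := congrFun hab 0
    have q1 := congrFun hab 1
    have q2 := congrFun hab 2
    simp only [Pi.add_apply, Pi.smul_apply, smul_eq_mul, Matrix.cons_val_zero,
      Matrix.cons_val_one, Matrix.head_cons, Matrix.cons_val_two, Matrix.tail_cons] at q0 q1 q2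
    rw [c0] at q0
    rw [c1] at q1
    rw [show γ t 2 = 2 from ht] at q2
    obtain ⟨hs0, hs1⟩ := hs
    obtain ⟨hu0, hu1⟩ := hu
    nlinarith [q0, q1, q2]
  · rw [segment_eq_image] at ha
    obtain ⟨s, hs, rfl⟩ := ha
    have q0 := congrFun hab 0
    have q1 := congrFun hab 1
    have q2 := congrFun hab 2
    simp only [Pi.add_apply, Pi.smul_apply, smul_eq_mul, Matrix.cons_val_zero,
      Matrix.cons_val_one, Matrix.head_cons, Matrix.cons_val_two, Matrix.tail_cons] at q0 q1 q2
    rw [c0] at q0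
    rw [c1] at q1
    rw [show γ t 2 = 2 from ht] at q2
    obtain ⟨hs0, hs1⟩ := hs
    obtain ⟨hu0, hu1⟩ := hu
    nlinarith [q0, q1, q2]
end

section
/- Let A ⊆ ℝ^3 be the union of the segments [(0,0,0),(0,1,1)] and [(0,1,1),(1,1,2)], and let B be the segment [(0,0,0),(-1,-1,2)]. Then the intersection of A + B with the line {x ∈ ℝ^3 : x_1 = x_2 = 0} equals the two-point set {(0,0,0), (0,0,4)}. -/
open Pointwise

theorem minkowski_sum_inter_line :
    ((segment ℝ (![0,0,0] : Fin 3 → ℝ) ![0,1,1] ∪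
        segment ℝ (![0,1,1] : Fin 3 → ℝ) ![1,1,2]) +
      segment ℝ (![0,0,0] : Fin 3 → ℝ) ![-1,-1,2]) ∩
      {x : Fin 3 → ℝ | x 0 = 0 ∧ x 1 = 0} =
    {(![0,0,0] : Fin 3 → ℝ), ![0,0,4]} := by
  ext x
  simp only [Set.mem_inter_iff, Set.mem_add, Set.mem_union, Set.mem_insert_iff,
    Set.mem_singleton_iff, Set.mem_setOf_eq, segment_eq_image, Set.mem_image,
    Set.mem_Icc]
  constructor
  · rintro ⟨⟨a, (⟨s, ⟨hs0, hs1⟩, rfl⟩ | ⟨s, ⟨hs0, hs1⟩, rfl⟩), b, ⟨u, ⟨hu0, hu1⟩, rfl⟩, rfl⟩, h0, h1⟩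
    · left
      simp only [Pi.add_apply, Pi.smul_apply, smul_eq_mul, Matrix.cons_val_zero,
        Matrix.cons_val_one, Matrix.head_cons] at h0 h1
      have hu : u = 0 := by linarith
      have hs : s = 0 := by nlinarith
      funext i
      fin_cases i <;>
        simp [hu, hs, Pi.add_apply, Pi.smul_apply, smul_eq_mul] <;> ring
    · right
      simp only [Pi.add_apply, Pi.smul_apply, smul_eq_mul, Matrix.cons_val_zero,
        Matrix.cons_val_one, Matrix.head_cons] at h0 h1
      have hu : u = 1 := by linarith
      have hs : s = 1 := by linarith
      funext i
      fin_cases i <;>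
        simp [hu, hs, Pi.add_apply, Pi.smul_apply, smul_eq_mul] <;> ring
  · rintro (rfl | rfl)
    · refine ⟨⟨![0,0,0], Or.inl ⟨0, by norm_num⟩, ![0,0,0], ⟨0, by norm_num⟩, ?_⟩, by simp, by simp⟩
      · funext i; fin_cases i <;> simp
    · refine ⟨⟨![1,1,2], Or.inr ⟨1, by norm_num⟩, ![-1,-1,2], ⟨1, by norm_num⟩, ?_⟩, by simp, by simp⟩
      · funext i; fin_cases i <;> norm_num
end

section
/- The set A = {x ∈ [-1,1]^3 : x has at least one negative coordinate and at least one nonnegative coordinate} is monovex. -/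
open Set

/-- Clamped-linear path: coordinate `i` moves linearly from `x i` to `y i`
during the "time window" `3 t ∈ [a i, a i + 1]` and is constant outside it. -/
noncomputable def mvPath (x y a : Fin 3 → ℝ) (t : unitInterval) : Fin 3 → ℝ :=
  fun i => x i + (y i - x i) * max 0 (min 1 (3 * (t : ℝ) - a i))

lemma clamp_mem (s : ℝ) : 0 ≤ max 0 (min 1 s) ∧ max 0 (min 1 s) ≤ 1 := by
  constructor
  · exact le_max_left _ _
  · exact max_le zero_le_one (min_le_left _ _)

lemma clamp_mono : Monotone (fun s : ℝ => max 0 (min 1 s)) := by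
  intro s s' h
  exact max_le_max le_rfl (min_le_min le_rfl h)

lemma clamp_of_nonpos {s : ℝ} (h : s ≤ 0) : max 0 (min 1 s) = 0 := by
  have h1 : min 1 s ≤ 0 := le_trans (min_le_right _ _) h
  exact max_eq_left h1

lemma clamp_of_one_le {s : ℝ} (h : 1 ≤ s) : max 0 (min 1 s) = 1 := by
  have h1 : min 1 s = 1 := min_eq_left h
  rw [h1]; exact max_eq_right zero_le_one

lemma mvPath_spec (x y a : Fin 3 → ℝ) (ha0 : ∀ i, 0 ≤ a i) (ha2 : ∀ i, a i ≤ 2) :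
    Continuous (mvPath x y a) ∧ mvPath x y a 0 = x ∧ mvPath x y a 1 = y ∧
    (∀ (t : unitInterval) (i : Fin 3), mvPath x y a t i ∈ uIcc (x i) (y i)) ∧
    (∀ (t : unitInterval) (i : Fin 3), 3 * (t : ℝ) ≤ a i → mvPath x y a t i = x i) ∧
    (∀ (t : unitInterval) (i : Fin 3), a i + 1 ≤ 3 * (t : ℝ) → mvPath x y a t i = y i) ∧
    (∀ i, Monotone (fun t => mvPath x y a t i) ∨ Antitone (fun t => mvPath x y a t i)) := by
  refine ⟨?_, ?_, ?_, ?_, ?_, ?_, ?_⟩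
  · apply continuous_pi
    intro i
    unfold mvPath
    fun_prop
  · funext i
    have h : (3 : ℝ) * ((0 : unitInterval) : ℝ) - a i ≤ 0 := by
      simp only [Set.Icc.coe_zero]; linarith [ha0 i]
    show x i + (y i - x i) * max 0 (min 1 (3 * ((0 : unitInterval) : ℝ) - a i)) = x i
    rw [clamp_of_nonpos h]; ring
  · funext i
    have h : (1 : ℝ) ≤ 3 * ((1 : unitInterval) : ℝ) - a i := by
      simp only [Set.Icc.coe_one]; linarith [ha2 i]
    show x i + (y i - x i) * max 0 (min 1 (3 * ((1 : unitInterval) : ℝ) - a i)) = y i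
    rw [clamp_of_one_le h]; ring
  · intro t i
    obtain ⟨h0, h1⟩ := clamp_mem (3 * (t : ℝ) - a i)
    rcases le_total (x i) (y i) with h | h
    · rw [Set.mem_uIcc]
      left
      simp only [mvPath]
      constructor <;> nlinarith
    · rw [Set.mem_uIcc]
      right
      simp only [mvPath]
      constructor <;> nlinarith
  · intro t i ht
    have h : 3 * (t : ℝ) - a i ≤ 0 := by linarith
    show x i + (y i - x i) * max 0 (min 1 (3 * (t : ℝ) - a i)) = x i
    rw [clamp_of_nonpos h]; ring
  · intro t i ht
    have h : (1 : ℝ) ≤ 3 * (t : ℝ) - a i := by linarith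
    show x i + (y i - x i) * max 0 (min 1 (3 * (t : ℝ) - a i)) = y i
    rw [clamp_of_one_le h]; ring
  · intro i
    rcases le_total (x i) (y i) with h | h
    · left
      intro t t' htt'
      have h3 : (t : ℝ) ≤ (t' : ℝ) := htt'
      have := clamp_mono (show 3 * (t : ℝ) - a i ≤ 3 * (t' : ℝ) - a i by linarith)
      simp only [mvPath]
      nlinarith
    · right
      intro t t' htt'
      have h3 : (t : ℝ) ≤ (t' : ℝ) := htt'
      have := clamp_mono (show 3 * (t : ℝ) - a i ≤ 3 * (t' : ℝ) - a i by linarith)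
      simp only [mvPath]
      nlinarith

lemma fin3_third : ∀ a b : Fin 3, a ≠ b → ∃ c : Fin 3, c ≠ a ∧ c ≠ b ∧
    ∀ d : Fin 3, d = a ∨ d = b ∨ d = c := by decide

/-- abbreviation for the set in question -/
def mvSet : Set (Fin 3 → ℝ) :=
  {x : Fin 3 → ℝ | (∀ i, x i ∈ Set.Icc (-1 : ℝ) 1) ∧ (∃ i, x i < 0) ∧ (∃ i, 0 ≤ x i)}

lemma mvGoal (x y : Fin 3 → ℝ) (a : Fin 3 → ℝ) (ha0 : ∀ i, 0 ≤ a i) (ha2 : ∀ i, a i ≤ 2)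
    (hbx : ∀ i, x i ∈ Set.Icc (-1 : ℝ) 1) (hby : ∀ i, y i ∈ Set.Icc (-1 : ℝ) 1)
    (hneg : ∀ t : unitInterval, ∃ i, mvPath x y a t i < 0)
    (hpos : ∀ t : unitInterval, ∃ i, 0 ≤ mvPath x y a t i) :
    ∃ γ : unitInterval → Fin 3 → ℝ,
      Continuous γ ∧ γ 0 = x ∧ γ 1 = y ∧ (∀ t, γ t ∈ mvSet) ∧
      ∀ i, Monotone (fun t => γ t i) ∨ Antitone (fun t => γ t i) := by
  obtain ⟨hc, h0, h1, huIcc, _, _, hmono⟩ := mvPath_spec x y a ha0 ha2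
  refine ⟨mvPath x y a, hc, h0, h1, ?_, hmono⟩
  intro t
  refine ⟨fun i => Set.uIcc_subset_Icc (hbx i) (hby i) (huIcc t i), hneg t, hpos t⟩

/-- The main building block: move coordinate `m1` first, then `m2`, then `m3`,
where `y m1 < 0`, `x m2 < 0 ≤ y m2`, `0 ≤ x m3`. -/
lemma mvBuild (x y : Fin 3 → ℝ) (m1 m2 m3 : Fin 3)
    (h12 : m1 ≠ m2) (h13 : m1 ≠ m3) (h23 : m2 ≠ m3)
    (hbx : ∀ i, x i ∈ Set.Icc (-1 : ℝ) 1) (hby : ∀ i, y i ∈ Set.Icc (-1 : ℝ) 1)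
    (h1 : y m1 < 0) (h2 : x m2 < 0) (h3 : 0 ≤ y m2) (h4 : 0 ≤ x m3) :
    ∃ γ : unitInterval → Fin 3 → ℝ,
      Continuous γ ∧ γ 0 = x ∧ γ 1 = y ∧ (∀ t, γ t ∈ mvSet) ∧
      ∀ i, Monotone (fun t => γ t i) ∨ Antitone (fun t => γ t i) := by
  set a : Fin 3 → ℝ := fun i => if i = m1 then 0 else if i = m2 then 1 else 2 with ha
  have ha0 : ∀ i, 0 ≤ a i := by
    intro i; simp only [ha]; split <;> [norm_num; skip]; split <;> norm_num
  have ha2 : ∀ i, a i ≤ 2 := by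
    intro i; simp only [ha]; split <;> [norm_num; skip]; split <;> norm_num
  have ham1 : a m1 = 0 := by simp [ha]
  have ham2 : a m2 = 1 := by simp [ha, h12.symm]
  have ham3 : a m3 = 2 := by simp [ha, h13.symm, h23.symm]
  obtain ⟨_, _, _, _, heqx, heqy, _⟩ := mvPath_spec x y a ha0 ha2
  apply mvGoal x y a ha0 ha2 hbx hby
  · intro t
    rcases le_total (3 * (t : ℝ)) 1 with ht | ht
    · exact ⟨m2, by rw [heqx t m2 (by rw [ham2]; exact ht)]; exact h2⟩
    · exact ⟨m1, by rw [heqy t m1 (by rw [ham1]; linarith)]; exact h1⟩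
  · intro t
    rcases le_total (3 * (t : ℝ)) 2 with ht | ht
    · exact ⟨m3, by rw [heqx t m3 (by rw [ham3]; exact ht)]; exact h4⟩
    · exact ⟨m2, by rw [heqy t m2 (by rw [ham2]; linarith)]; exact h3⟩

/-- The dual building block: `0 ≤ y m1`, `y m2 < 0 ≤ x m2`, `x m3 < 0`. -/
lemma mvBuild' (x y : Fin 3 → ℝ) (m1 m2 m3 : Fin 3)
    (h12 : m1 ≠ m2) (h13 : m1 ≠ m3) (h23 : m2 ≠ m3)
    (hbx : ∀ i, x i ∈ Set.Icc (-1 : ℝ) 1) (hby : ∀ i, y i ∈ Set.Icc (-1 : ℝ) 1)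
    (h1 : 0 ≤ y m1) (h2 : 0 ≤ x m2) (h3 : y m2 < 0) (h4 : x m3 < 0) :
    ∃ γ : unitInterval → Fin 3 → ℝ,
      Continuous γ ∧ γ 0 = x ∧ γ 1 = y ∧ (∀ t, γ t ∈ mvSet) ∧
      ∀ i, Monotone (fun t => γ t i) ∨ Antitone (fun t => γ t i) := by
  set a : Fin 3 → ℝ := fun i => if i = m1 then 0 else if i = m2 then 1 else 2 with ha
  have ha0 : ∀ i, 0 ≤ a i := by
    intro i; simp only [ha]; split <;> [norm_num; skip]; split <;> norm_num
  have ha2 : ∀ i, a i ≤ 2 := by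
    intro i; simp only [ha]; split <;> [norm_num; skip]; split <;> norm_num
  have ham1 : a m1 = 0 := by simp [ha]
  have ham2 : a m2 = 1 := by simp [ha, h12.symm]
  have ham3 : a m3 = 2 := by simp [ha, h13.symm, h23.symm]
  obtain ⟨_, _, _, _, heqx, heqy, _⟩ := mvPath_spec x y a ha0 ha2
  apply mvGoal x y a ha0 ha2 hbx hby
  · intro t
    rcases le_total (3 * (t : ℝ)) 2 with ht | ht
    · exact ⟨m3, by rw [heqx t m3 (by rw [ham3]; exact ht)]; exact h4⟩
    · exact ⟨m2, by rw [heqy t m2 (by rw [ham2]; linarith)]; exact h3⟩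
  · intro t
    rcases le_total (3 * (t : ℝ)) 1 with ht | ht
    · exact ⟨m2, by rw [heqx t m2 (by rw [ham2]; exact ht)]; exact h2⟩
    · exact ⟨m1, by rw [heqy t m1 (by rw [ham1]; linarith)]; exact h1⟩

theorem example_set_monovex :
    Monovex {x : Fin 3 → ℝ | (∀ i, x i ∈ Set.Icc (-1 : ℝ) 1) ∧
      (∃ i, x i < 0) ∧ (∃ i, 0 ≤ x i)} := by
  intro x hx y hy
  obtain ⟨hbx, ⟨i0, hi0⟩, ⟨j0, hj0⟩⟩ := hx
  obtain ⟨hby, ⟨i1, hi1⟩, ⟨j1, hj1⟩⟩ := hy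
  show ∃ γ : unitInterval → Fin 3 → ℝ,
      Continuous γ ∧ γ 0 = x ∧ γ 1 = y ∧ (∀ t, γ t ∈ mvSet) ∧
      ∀ i, Monotone (fun t => γ t i) ∨ Antitone (fun t => γ t i)
  by_cases hsame : ∀ i, x i < 0 ↔ y i < 0
  · -- same sign pattern: straight line (all windows equal)
    obtain ⟨_, _, _, huIcc, _, _, _⟩ :=
      mvPath_spec x y (fun _ => 0) (fun _ => le_rfl) (fun _ => by norm_num)
    apply mvGoal x y (fun _ => 0) (fun _ => le_rfl) (fun _ => by norm_num) hbx hby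
    · intro t
      refine ⟨i0, ?_⟩
      have hy0 : y i0 < 0 := (hsame i0).1 hi0
      have := huIcc t i0
      rw [Set.mem_uIcc] at this
      rcases this with ⟨h, h'⟩ | ⟨h, h'⟩ <;> linarith
    · intro t
      refine ⟨j0, ?_⟩
      have hy0 : 0 ≤ y j0 := by
        by_contra h
        exact absurd ((hsame j0).2 (lt_of_not_ge h)) (not_lt.2 hj0)
      have := huIcc t j0
      rw [Set.mem_uIcc] at this
      rcases this with ⟨h, h'⟩ | ⟨h, h'⟩ <;> linarith
  · push_neg at hsame
    obtain ⟨m2, hm2⟩ := hsame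
    rcases hm2 with ⟨hxm2, hym2⟩ | ⟨hxm2, hym2⟩
    · -- x m2 < 0 ≤ y m2
      have hi1m2 : i1 ≠ m2 := fun h => absurd (h ▸ hi1) (not_lt.2 hym2)
      obtain ⟨m3, hm31, hm32, hall⟩ := fin3_third i1 m2 hi1m2
      rcases le_or_gt 0 (x m3) with hxm3 | hxm3
      · exact mvBuild x y i1 m2 m3 hi1m2 (Ne.symm hm31) (Ne.symm hm32) hbx hby
          hi1 hxm2 hym2 hxm3
      · -- x m3 < 0, so x's nonneg coordinate is i1, and y i1 < 0
        have hxi1 : 0 ≤ x i1 := by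
          rcases hall j0 with h | h | h
          · exact h ▸ hj0
          · exact absurd (h ▸ hj0) (not_le.2 hxm2)
          · exact absurd (h ▸ hj0) (not_le.2 hxm3)
        exact mvBuild' x y m2 i1 m3 (Ne.symm hi1m2) (Ne.symm hm32) (Ne.symm hm31) hbx hby
          hym2 hxi1 hi1 hxm3
    · -- 0 ≤ x m2, y m2 < 0
      have hj1m2 : j1 ≠ m2 := fun h => absurd (h ▸ hj1) (not_le.2 hym2)
      obtain ⟨m3, hm31, hm32, hall⟩ := fin3_third j1 m2 hj1m2
      rcases lt_or_ge (x m3) 0 with hxm3 | hxm3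
      · exact mvBuild' x y j1 m2 m3 hj1m2 (Ne.symm hm31) (Ne.symm hm32) hbx hby
          hj1 hxm2 hym2 hxm3
      · -- 0 ≤ x m3, so x's negative coordinate is j1, and 0 ≤ y j1
        have hxj1 : x j1 < 0 := by
          rcases hall i0 with h | h | h
          · exact h ▸ hi0
          · exact absurd (h ▸ hi0) (not_lt.2 hxm2)
          · exact absurd (h ▸ hi0) (not_lt.2 hxm3)
        exact mvBuild x y m2 j1 m3 (Ne.symm hj1m2) (Ne.symm hm32) (Ne.symm hm31) hbx hby
          hym2 hxj1 hj1 hxm3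
end

section
/- The set A = {x ∈ [-1,1]^3 : x has at least one negative coordinate and at least one nonnegative coordinate} is not contractible. (Hence a monovex subset of ℝ^3 that is neither open nor closed need not be contractible.) -/
noncomputable section NotContractibleAux

open Complex Set Real

namespace NotContractibleAux

/-- Telescoping product. -/
lemma prod_telescope (f : ℕ → ℂ) (hf : ∀ j, f j ≠ 0) (n : ℕ) :
    f 0 * ∏ j ∈ Finset.range n, (f (j + 1) / f j) = f n := by
  induction n with
  | zero => simp
  | succ n ih =>
    rw [Finset.prod_range_succ, ← mul_assoc, ih, mul_comm, div_mul_cancel₀ _ (hf n)]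

lemma mem_slit_of_close {w : ℂ} (h : ‖w - 1‖ < 1) : w ∈ Complex.slitPlane := by
  have := Complex.mem_slitPlane_of_norm_lt_one h
  simpa using this

/-- Existence of a continuous logarithm lift on `[0,1]` of a nonvanishing map. -/
lemma exists_lift (u : ℝ → ℂ) (hu : Continuous u) (h0 : ∀ s, u s ≠ 0) :
    ∃ L : ℝ → ℂ, Continuous L ∧ ∀ s ∈ Icc (0 : ℝ) 1, Complex.exp (L s) = u s := by
  obtain ⟨s₀, hs₀, hmin⟩ := isCompact_Icc.exists_isMinOn (⟨0, by norm_num⟩ :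
      (Icc (0:ℝ) 1).Nonempty) (hu.norm.continuousOn)
  set m := ‖u s₀‖ with hm
  have hmpos : 0 < m := norm_pos_iff.mpr (h0 s₀)
  have hmle : ∀ z ∈ Icc (0:ℝ) 1, m ≤ ‖u z‖ := fun z hz => hmin hz
  have huc : UniformContinuousOn u (Icc 0 1) :=
    isCompact_Icc.uniformContinuousOn_of_continuous hu.continuousOn
  obtain ⟨δ, hδ, hδ'⟩ := Metric.uniformContinuousOn_iff.mp huc m hmpos
  obtain ⟨n, hn⟩ := exists_nat_gt (1 / δ)
  have hnpos : (0 : ℝ) < n := lt_trans (by positivity) hn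
  have hstep : (1 : ℝ) / n < δ := by
    rw [div_lt_iff₀ hnpos]
    rw [div_lt_iff₀ hδ] at hn
    nlinarith
  -- the terms
  set W : ℕ → ℝ → ℂ := fun j s => u (min s (((j : ℝ) + 1) / n)) / u (min s ((j : ℝ) / n))
    with hW
  have hWne : ∀ j s, W j s ≠ 0 := fun j s => div_ne_zero (h0 _) (h0 _)
  have hslit : ∀ j, j < n → ∀ s : ℝ, W j s ∈ Complex.slitPlane := by
    intro j hj s
    have hjn : (j : ℝ) / n ≤ ((j : ℝ) + 1) / n := by gcongr; linarith
    rcases le_or_gt s ((j : ℝ) / n) with h | h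
    · have h1 : min s ((j : ℝ) / n) = s := min_eq_left h
      have h2 : min s (((j : ℝ) + 1) / n) = s := min_eq_left (h.trans hjn)
      rw [hW]
      simp only [h1, h2]
      rw [div_self (h0 s)]
      exact Complex.one_mem_slitPlane
    · have hyv : min s ((j : ℝ) / n) = (j : ℝ) / n := min_eq_right h.le
      have hxl : (j : ℝ) / n ≤ min s (((j : ℝ) + 1) / n) := le_min h.le hjn
      have hxu : min s (((j : ℝ) + 1) / n) ≤ ((j : ℝ) + 1) / n := min_le_right _ _
      have hjmem : (j : ℝ) / n ∈ Icc (0 : ℝ) 1 := by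
        constructor
        · positivity
        · rw [div_le_one hnpos]
          exact_mod_cast hj.le
      have hj1mem : ((j : ℝ) + 1) / n ∈ Icc (0 : ℝ) 1 := by
        constructor
        · positivity
        · rw [div_le_one hnpos]
          exact_mod_cast hj
      have hxmem : min s (((j : ℝ) + 1) / n) ∈ Icc (0 : ℝ) 1 :=
        ⟨le_trans hjmem.1 hxl, le_trans hxu hj1mem.2⟩
      have hymem : min s ((j : ℝ) / n) ∈ Icc (0 : ℝ) 1 := by rw [hyv]; exact hjmem
      have hdist : dist (min s (((j : ℝ) + 1) / n)) (min s ((j : ℝ) / n)) < δ := by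
        rw [hyv, Real.dist_eq]
        have hdiff : ((j : ℝ) + 1) / n - (j : ℝ) / n = 1 / n := by ring
        have : |min s (((j : ℝ) + 1) / n) - (j : ℝ) / n| ≤ 1 / n := by
          rw [abs_le]
          constructor
          · linarith [one_div_nonneg.mpr hnpos.le]
          · linarith
        linarith
      have hclose := hδ' _ hxmem _ hymem hdist
      rw [dist_eq_norm] at hclose
      apply mem_slit_of_close
      have hsub : W j s - 1 =
          (u (min s (((j : ℝ) + 1) / n)) - u (min s ((j : ℝ) / n))) / u (min s ((j : ℝ) / n)) := by
        rw [hW]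
        simp only []
        rw [eq_div_iff (h0 _), sub_mul, div_mul_cancel₀ _ (h0 _), one_mul]
      rw [hsub, norm_div, div_lt_one (norm_pos_iff.mpr (h0 _))]
      exact lt_of_lt_of_le hclose (hmle _ hymem)
  refine ⟨fun s => Complex.log (u 0) + ∑ j ∈ Finset.range n, Complex.log (W j s), ?_, ?_⟩
  · apply continuous_const.add
    apply continuous_finset_sum
    intro j hj
    rw [continuous_iff_continuousAt]
    intro s
    have hWc : Continuous (W j) := by
      apply Continuous.div
      · exact hu.comp (continuous_id.min continuous_const)
      · exact hu.comp (continuous_id.min continuous_const)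
      · intro x; exact h0 _
    exact hWc.continuousAt.clog (hslit j (Finset.mem_range.mp hj) s)
  · intro s hs
    rw [Complex.exp_add, Complex.exp_sum, Complex.exp_log (h0 0)]
    have : ∀ j ∈ Finset.range n, Complex.exp (Complex.log (W j s)) = W j s := by
      intro j _
      exact Complex.exp_log (hWne j s)
    rw [Finset.prod_congr rfl this]
    have htel := prod_telescope (fun j => u (min s ((j : ℝ) / n))) (fun j => h0 _) n
    push_cast at htel
    rw [zero_div, min_eq_right hs.1, div_self (ne_of_gt hnpos), min_eq_left hs.2] at htel
    simp only [hW]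
    exact htel

/-- A continuous `ℤ`-valued function on `[0,1]` takes equal values at the endpoints. -/
lemma eq_of_int_valued (φ : ℝ → ℝ) (hφ : ContinuousOn φ (Icc 0 1))
    (hint : ∀ s ∈ Icc (0 : ℝ) 1, ∃ k : ℤ, φ s = k) : φ 1 = φ 0 := by
  by_contra hne
  obtain ⟨k0, hk0⟩ := hint 0 (by norm_num)
  obtain ⟨k1, hk1⟩ := hint 1 (by norm_num)
  rcases lt_or_gt_of_ne hne with h | h
  · -- φ 1 < φ 0
    have hk : (k1 : ℝ) < k0 := by rw [← hk0, ← hk1]; exact h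
    have hk' : (k1 : ℤ) + 1 ≤ k0 := by exact_mod_cast Int.add_one_le_of_lt (by exact_mod_cast hk)
    have hmem : ((k1 : ℝ) + 1 / 2) ∈ Icc (φ 1) (φ 0) := by
      constructor
      · rw [hk1]; linarith
      · rw [hk0]
        have : ((k1 : ℝ) + 1) ≤ k0 := by exact_mod_cast hk'
        linarith
    obtain ⟨s, hsmem, hs⟩ := intermediate_value_Icc' (by norm_num : (0:ℝ) ≤ 1) hφ hmem
    obtain ⟨k, hkk⟩ := hint s hsmem
    rw [hkk] at hs
    have : ((2 * k : ℤ) : ℝ) = ((2 * k1 + 1 : ℤ) : ℝ) := by push_cast; linarith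
    have := Int.cast_injective (α := ℝ) this
    omega
  · have hk : (k0 : ℝ) < k1 := by rw [← hk0, ← hk1]; exact h
    have hk' : (k0 : ℤ) + 1 ≤ k1 := by exact_mod_cast Int.add_one_le_of_lt (by exact_mod_cast hk)
    have hmem : ((k0 : ℝ) + 1 / 2) ∈ Icc (φ 0) (φ 1) := by
      constructor
      · rw [hk0]; linarith
      · rw [hk1]
        have : ((k0 : ℝ) + 1) ≤ k1 := by exact_mod_cast hk'
        linarith
    obtain ⟨s, hsmem, hs⟩ := intermediate_value_Icc (by norm_num : (0:ℝ) ≤ 1) hφ hmem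
    obtain ⟨k, hkk⟩ := hint s hsmem
    rw [hkk] at hs
    have : ((2 * k : ℤ) : ℝ) = ((2 * k0 + 1 : ℤ) : ℝ) := by push_cast; linarith
    have := Int.cast_injective (α := ℝ) this
    omega

/-- Two continuous lifts of the same map have constant difference across `[0,1]`. -/
lemma lift_unique (L M : ℝ → ℂ) (hL : ContinuousOn L (Icc 0 1)) (hM : ContinuousOn M (Icc 0 1))
    (h : ∀ s ∈ Icc (0 : ℝ) 1, Complex.exp (L s) = Complex.exp (M s)) :
    L 1 - M 1 = L 0 - M 0 := by
  have key : ∀ s ∈ Icc (0 : ℝ) 1, ∃ k : ℤ, L s - M s = (k : ℂ) * (2 * (π : ℂ) * Complex.I) := by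
    intro s hs
    have : Complex.exp (L s - M s) = 1 := by
      rw [Complex.exp_sub, h s hs, div_self (Complex.exp_ne_zero _)]
    exact Complex.exp_eq_one_iff.mp this
  set φ : ℝ → ℝ := fun s => (L s - M s).im / (2 * π) with hφ
  have him : ∀ (k : ℤ), ((k : ℂ) * (2 * (π : ℂ) * Complex.I)).im = k * (2 * π) := by
    intro k
    simp [Complex.mul_im]
  have hφc : ContinuousOn φ (Icc 0 1) := by
    apply ContinuousOn.div_const
    exact Complex.continuous_im.comp_continuousOn (hL.sub hM)
  have hφint : ∀ s ∈ Icc (0 : ℝ) 1, ∃ k : ℤ, φ s = k := by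
    intro s hs
    obtain ⟨k, hk⟩ := key s hs
    refine ⟨k, ?_⟩
    rw [hφ]
    simp only [hk, him k]
    field_simp
  have h10 := eq_of_int_valued φ hφc hφint
  obtain ⟨k0, hk0⟩ := key 0 (by norm_num)
  obtain ⟨k1, hk1⟩ := key 1 (by norm_num)
  have e1 : φ 1 = k1 := by rw [hφ]; simp only [hk1, him k1]; field_simp
  have e0 : φ 0 = k0 := by rw [hφ]; simp only [hk0, him k0]; field_simp
  have : (k1 : ℝ) = k0 := by rw [← e1, ← e0, h10]
  have hkk : k1 = k0 := by exact_mod_cast this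
  rw [hk1, hk0, hkk]

/-- Homotopy invariance step: nearby loops have the same winding. -/
lemma lift_diff_eq_of_close (u v L M : ℝ → ℂ)
    (hune : ∀ s ∈ Icc (0:ℝ) 1, u s ≠ 0)
    (hL : ContinuousOn L (Icc 0 1)) (hM : ContinuousOn M (Icc 0 1))
    (hLl : ∀ s ∈ Icc (0:ℝ) 1, Complex.exp (L s) = u s)
    (hMl : ∀ s ∈ Icc (0:ℝ) 1, Complex.exp (M s) = v s)
    (hclose : ∀ s ∈ Icc (0:ℝ) 1, ‖v s - u s‖ < ‖u s‖)
    (huloop : u 0 = u 1) (hvloop : v 0 = v 1) :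
    M 1 - M 0 = L 1 - L 0 := by
  set N : ℝ → ℂ := fun s => L s + Complex.log (v s / u s) with hN
  have hvu : ∀ s ∈ Icc (0:ℝ) 1, v s / u s ∈ Complex.slitPlane := by
    intro s hs
    apply mem_slit_of_close
    have hu := hune s hs
    have : v s / u s - 1 = (v s - u s) / u s := by field_simp
    rw [this, norm_div, div_lt_one (norm_pos_iff.mpr hu)]
    exact hclose s hs
  have hvcont : ContinuousOn v (Icc 0 1) := by
    have : ContinuousOn (fun s => Complex.exp (M s)) (Icc 0 1) :=
      Complex.continuous_exp.comp_continuousOn hM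
    exact this.congr fun s hs => (hMl s hs).symm
  have hucont : ContinuousOn u (Icc 0 1) := by
    have : ContinuousOn (fun s => Complex.exp (L s)) (Icc 0 1) :=
      Complex.continuous_exp.comp_continuousOn hL
    exact this.congr fun s hs => (hLl s hs).symm
  have hNc : ContinuousOn N (Icc 0 1) := by
    apply hL.add
    intro s hs
    exact ((hvcont s hs).div (hucont s hs) (hune s hs)).clog (hvu s hs)
  have hNl : ∀ s ∈ Icc (0:ℝ) 1, Complex.exp (N s) = Complex.exp (M s) := by
    intro s hs
    have hvs : v s ≠ 0 := by
      intro hv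
      have h1 := hclose s hs
      rw [hv] at h1
      simp only [zero_sub, norm_neg] at h1
      exact lt_irrefl _ h1
    rw [hN]
    simp only []
    rw [Complex.exp_add, hLl s hs, Complex.exp_log (div_ne_zero hvs (hune s hs)), hMl s hs,
      mul_comm, div_mul_cancel₀ _ (hune s hs)]
  have := lift_unique M N hM hNc (fun s hs => (hNl s hs).symm)
  have hend : v 1 / u 1 = v 0 / u 0 := by rw [← huloop, ← hvloop]
  have hN1 : N 1 = L 1 + Complex.log (v 1 / u 1) := rfl
  have hN0 : N 0 = L 0 + Complex.log (v 0 / u 0) := rfl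
  rw [hN1, hN0, hend] at this
  linear_combination this

/-- Key lemma: if a nonvanishing family of loops ends constant, the initial loop has
winding zero, i.e. any lift of it closes up. -/
lemma lift_closes_of_nullhomotopy (K : ℝ → ℝ → ℂ)
    (hK : Continuous fun p : ℝ × ℝ => K p.1 p.2)
    (hne : ∀ t s, K t s ≠ 0)
    (hloop : ∀ t, K t 0 = K t 1)
    (hconst : ∀ s, K 1 s = K 1 0)
    (L0 : ℝ → ℂ) (hL0 : Continuous L0)
    (hlift : ∀ s ∈ Icc (0 : ℝ) 1, Complex.exp (L0 s) = K 0 s) :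
    L0 1 = L0 0 := by
  have hKt : ∀ t, Continuous (K t) := by
    intro t
    exact hK.comp (Continuous.prodMk_right t)
  choose Lf hLfc hLf using fun t => exists_lift (K t) (hKt t) (hne t)
  set W : ℝ → ℂ := fun t => Lf t 1 - Lf t 0 with hWdef
  have hlc : ∀ t : ℝ, ∃ δ > 0, ∀ t', dist t' t < δ → W t' = W t := by
    intro t
    -- minimum of ‖K t ·‖ on [0,1]
    obtain ⟨s₀, hs₀, hmin⟩ := isCompact_Icc.exists_isMinOn (⟨0, by norm_num⟩ :
        (Icc (0:ℝ) 1).Nonempty) ((hKt t).norm.continuousOn)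
    set m := ‖K t s₀‖ with hm
    have hmpos : 0 < m := norm_pos_iff.mpr (hne t s₀)
    have hmle : ∀ z ∈ Icc (0:ℝ) 1, m ≤ ‖K t z‖ := fun z hz => hmin hz
    have hcmp : IsCompact (Icc (t - 1) (t + 1) ×ˢ Icc (0:ℝ) 1) :=
      isCompact_Icc.prod isCompact_Icc
    have huc := hcmp.uniformContinuousOn_of_continuous hK.continuousOn
    obtain ⟨δ, hδ, hδ'⟩ := Metric.uniformContinuousOn_iff.mp huc m hmpos
    refine ⟨min δ 1, by positivity, ?_⟩
    intro t' ht'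
    have ht'1 : dist t' t < 1 := lt_of_lt_of_le ht' (min_le_right _ _)
    have ht'δ : dist t' t < δ := lt_of_lt_of_le ht' (min_le_left _ _)
    have hclose : ∀ s ∈ Icc (0:ℝ) 1, ‖K t' s - K t s‖ < ‖K t s‖ := by
      intro s hs
      have habs0 : |t' - t| ≤ 1 := le_of_lt (by rwa [Real.dist_eq] at ht'1)
      have habs := abs_le.mp habs0
      have hp : (t', s) ∈ Icc (t - 1) (t + 1) ×ˢ Icc (0:ℝ) 1 :=
        ⟨⟨by linarith [habs.1], by linarith [habs.2]⟩, hs⟩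
      have hq : (t, s) ∈ Icc (t - 1) (t + 1) ×ˢ Icc (0:ℝ) 1 :=
        ⟨⟨by linarith, by linarith⟩, hs⟩
      have hd : dist ((t', s) : ℝ × ℝ) (t, s) < δ := by
        rw [Prod.dist_eq]
        simp only [dist_self]
        rw [max_eq_left dist_nonneg]
        exact ht'δ
      have := hδ' _ hp _ hq hd
      rw [dist_eq_norm] at this
      exact lt_of_lt_of_le this (hmle s hs)
    have := lift_diff_eq_of_close (K t) (K t') (Lf t) (Lf t')
      (fun s _ => hne t s)
      (hLfc t).continuousOn (hLfc t').continuousOn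
      (hLf t) (hLf t') hclose (hloop t) (hloop t')
    exact this
  -- W is constant on ℝ
  have hWconst : W 1 = W 0 := by
    set S : Set ℝ := {t | W t = W 0} with hS
    have hSopen : IsOpen S := by
      rw [Metric.isOpen_iff]
      intro t ht
      obtain ⟨δ, hδ, hδ'⟩ := hlc t
      exact ⟨δ, hδ, fun t' ht' => by
        rw [mem_setOf_eq, hδ' t' (by rwa [Metric.mem_ball] at ht'), ht]⟩
    have hScopen : IsOpen Sᶜ := by
      rw [Metric.isOpen_iff]
      intro t ht
      obtain ⟨δ, hδ, hδ'⟩ := hlc t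
      refine ⟨δ, hδ, fun t' ht' => ?_⟩
      intro hmem
      apply ht
      rw [mem_setOf_eq, ← hδ' t' (by rwa [Metric.mem_ball] at ht')]
      exact hmem
    have hclopen : IsClopen S := ⟨by rw [← isOpen_compl_iff]; exact hScopen, hSopen⟩
    have := (isClopen_iff.mp hclopen)
    rcases this with h | h
    · exfalso
      have : (0 : ℝ) ∈ S := rfl
      rw [h] at this
      exact this
    · have : (1 : ℝ) ∈ S := by rw [h]; trivial
      exact this
  have hW1 : W 1 = 0 := by
    have := lift_unique (Lf 1) (fun _ => Complex.log (K 1 0))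
      (hLfc 1).continuousOn continuousOn_const
      (fun s hs => by rw [hLf 1 s hs, hconst s, Complex.exp_log (hne 1 0)])
    show Lf 1 1 - Lf 1 0 = 0
    linear_combination this
  have hW0 : W 0 = L0 1 - L0 0 := by
    have := lift_unique (Lf 0) L0 (hLfc 0).continuousOn hL0.continuousOn
      (fun s hs => by rw [hLf 0 s hs, hlift s hs])
    show Lf 0 1 - Lf 0 0 = L0 1 - L0 0
    linear_combination this
  have : L0 1 - L0 0 = 0 := by rw [← hW0, ← hWconst, hW1]
  exact sub_eq_zero.mp this

/-- coordinates of the loop -/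
def aa (s : ℝ) : ℝ := Real.cos (2 * π * s)

def bb (s : ℝ) : ℝ := Real.sin (2 * π * s)

def MM (s : ℝ) : ℝ := max (aa s) (max 0 (-bb s))

def mm (s : ℝ) : ℝ := min (aa s) (min 0 (-bb s))

def dd (s : ℝ) : Fin 3 → ℝ := ![aa s, 0, -bb s]

/-- the loop in `ℝ³` -/
def gam (s : ℝ) : Fin 3 → ℝ := fun i => -(MM s + mm s) / 2 + dd s i

lemma aa_le : ∀ s, |aa s| ≤ 1 := fun s => Real.abs_cos_le_one _

lemma bb_le : ∀ s, |bb s| ≤ 1 := fun s => Real.abs_sin_le_one _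

lemma MM_mem (s : ℝ) : 0 ≤ MM s ∧ MM s ≤ 1 := by
  have h1 := abs_le.mp (aa_le s)
  have h2 := abs_le.mp (bb_le s)
  constructor
  · exact le_trans (le_max_left 0 (-bb s)) (le_max_right _ _)
  · apply max_le h1.2 (max_le (by norm_num) (by linarith))

lemma mm_mem (s : ℝ) : -1 ≤ mm s ∧ mm s ≤ 0 := by
  have h1 := abs_le.mp (aa_le s)
  have h2 := abs_le.mp (bb_le s)
  constructor
  · apply le_min h1.1 (le_min (by norm_num) (by linarith))
  · exact le_trans (min_le_right _ _) (min_le_left _ _)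

lemma mm_lt_MM (s : ℝ) : mm s < MM s := by
  rcases lt_or_ge (mm s) (MM s) with h | h
  · exact h
  exfalso
  have h0M := (MM_mem s).1
  have hm0 := (mm_mem s).2
  have hMm : MM s = mm s := le_antisymm (by linarith) (by linarith)
  have hM0 : MM s = 0 := by linarith
  have hm0' : mm s = 0 := by linarith
  have haa : aa s = 0 := by
    have h1 : aa s ≤ MM s := le_max_left _ _
    have h2 : mm s ≤ aa s := min_le_left _ _
    linarith
  have hbb : bb s = 0 := by
    have h1 : -bb s ≤ MM s := le_trans (le_max_right 0 _) (le_max_right _ _)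
    have h2 : mm s ≤ -bb s := le_trans (min_le_right _ _) (min_le_right _ _)
    have : -bb s = 0 := by linarith
    linarith
  have := Real.sin_sq_add_cos_sq (2 * π * s)
  rw [show Real.sin (2 * π * s) = bb s from rfl, show Real.cos (2 * π * s) = aa s from rfl,
    haa, hbb] at this
  norm_num at this

lemma dd_bounds (s : ℝ) (i : Fin 3) : mm s ≤ dd s i ∧ dd s i ≤ MM s := by
  fin_cases i
  · exact ⟨min_le_left _ _, by simp only [dd]; simp; exact le_max_left _ _⟩
  · constructor
    · exact le_trans (min_le_right _ _) (min_le_left _ _)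
    · exact le_trans (le_max_left 0 (-bb s)) (le_max_right _ _)
  · constructor
    · exact le_trans (min_le_right _ _) (min_le_right _ _)
    · simp only [dd]
      simp
      exact le_trans (le_max_right 0 (-bb s)) (le_max_right _ _)

lemma gam_mem (s : ℝ) : gam s ∈ {x : Fin 3 → ℝ | (∀ i, x i ∈ Set.Icc (-1 : ℝ) 1) ∧
    (∃ i, x i < 0) ∧ (∃ i, 0 ≤ x i)} := by
  have hM := MM_mem s
  have hm := mm_mem s
  have hlt := mm_lt_MM s
  refine ⟨?_, ?_, ?_⟩
  · intro i
    have hd := dd_bounds s i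
    constructor
    · show -1 ≤ -(MM s + mm s) / 2 + dd s i
      linarith [hd.1]
    · show -(MM s + mm s) / 2 + dd s i ≤ 1
      linarith [hd.2]
  · -- a negative coordinate: the one achieving the min
    rcases le_total (aa s) (min 0 (-bb s)) with h | h
    · refine ⟨0, ?_⟩
      show -(MM s + mm s) / 2 + dd s 0 < 0
      have : dd s 0 = aa s := rfl
      have hmma : mm s = aa s := min_eq_left h
      rw [this, ← hmma]
      linarith
    · rcases le_total (0 : ℝ) (-bb s) with h2 | h2
      · refine ⟨1, ?_⟩
        show -(MM s + mm s) / 2 + dd s 1 < 0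
        have h3 : dd s 1 = 0 := rfl
        have hmma : mm s = 0 := by
          rw [mm, min_eq_right h, min_eq_left h2]
        rw [h3, hmma]
        rw [hmma] at hlt
        linarith
      · refine ⟨2, ?_⟩
        show -(MM s + mm s) / 2 + dd s 2 < 0
        have h3 : dd s 2 = -bb s := rfl
        have hmma : mm s = -bb s := by
          rw [mm, min_eq_right h, min_eq_right h2]
        rw [h3, ← hmma]
        linarith
  · -- a nonnegative coordinate: the one achieving the max
    rcases le_total (max 0 (-bb s)) (aa s) with h | h
    · refine ⟨0, ?_⟩
      show 0 ≤ -(MM s + mm s) / 2 + dd s 0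
      have h3 : dd s 0 = aa s := rfl
      have hMa : MM s = aa s := max_eq_left h
      rw [h3, ← hMa]
      linarith
    · rcases le_total (-bb s) (0 : ℝ) with h2 | h2
      · refine ⟨1, ?_⟩
        show 0 ≤ -(MM s + mm s) / 2 + dd s 1
        have h3 : dd s 1 = 0 := rfl
        have hMa : MM s = 0 := by
          rw [MM, max_eq_right h, max_eq_left h2]
        rw [h3, hMa]
        rw [hMa] at hlt
        linarith
      · refine ⟨2, ?_⟩
        show 0 ≤ -(MM s + mm s) / 2 + dd s 2
        have h3 : dd s 2 = -bb s := rfl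
        have hMa : MM s = -bb s := by
          rw [MM, max_eq_right h, max_eq_right h2]
        rw [h3, ← hMa]
        linarith

lemma aa_cont : Continuous aa := Real.continuous_cos.comp (by continuity)

lemma bb_cont : Continuous bb := Real.continuous_sin.comp (by continuity)

lemma gam_cont : Continuous gam := by
  apply continuous_pi
  intro i
  apply Continuous.add
  · apply Continuous.div_const
    apply Continuous.neg
    exact (aa_cont.max (continuous_const.max bb_cont.neg)).add
      (aa_cont.min (continuous_const.min bb_cont.neg))
  · fin_cases i
    · exact aa_cont
    · exact continuous_const
    · exact bb_cont.neg

lemma gam_loop : gam 1 = gam 0 := by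
  have haa : aa 1 = aa 0 := by
    simp [aa, mul_one, Real.cos_two_pi, Real.cos_zero]
  have hbb : bb 1 = bb 0 := by
    simp [bb, mul_one, Real.sin_two_pi, Real.sin_zero]
  funext i
  simp only [gam, MM, mm, dd, haa, hbb]

/-- the map to `ℂ ∖ {0}` -/
def fc (x : Fin 3 → ℝ) : ℂ := ((x 0 - x 1 : ℝ) : ℂ) + ((x 1 - x 2 : ℝ) : ℂ) * Complex.I

lemma fc_cont : Continuous fc := by
  apply Continuous.add
  · exact Complex.continuous_ofReal.comp ((continuous_apply 0).sub (continuous_apply 1))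
  · exact (Complex.continuous_ofReal.comp
      ((continuous_apply 1).sub (continuous_apply 2))).mul continuous_const

lemma fc_ne_zero (x : Fin 3 → ℝ) (hx : x ∈ {x : Fin 3 → ℝ | (∀ i, x i ∈ Set.Icc (-1 : ℝ) 1) ∧
    (∃ i, x i < 0) ∧ (∃ i, 0 ≤ x i)}) : fc x ≠ 0 := by
  obtain ⟨-, ⟨i, hi⟩, ⟨j, hj⟩⟩ := hx
  intro h
  have hre : x 0 - x 1 = 0 := by
    have := congrArg Complex.re h
    simpa [fc] using this
  have him : x 1 - x 2 = 0 := by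
    have := congrArg Complex.im h
    simpa [fc] using this
  have h01 : x 0 = x 1 := by linarith
  have h12 : x 1 = x 2 := by linarith
  fin_cases i <;> fin_cases j <;> simp_all <;> linarith

lemma fc_gam (s : ℝ) : fc (gam s) = ((aa s : ℝ) : ℂ) + ((bb s : ℝ) : ℂ) * Complex.I := by
  have h0 : gam s 0 - gam s 1 = aa s := by
    simp only [gam, dd]
    simp
  have h1 : gam s 1 - gam s 2 = bb s := by
    simp only [gam, dd]
    simp
  rw [fc, h0, h1]

lemma exp_eq_gam (s : ℝ) :
    Complex.exp (((2 * π * s : ℝ) : ℂ) * Complex.I) = fc (gam s) := by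
  rw [fc_gam, Complex.exp_mul_I]
  simp [aa, bb, Complex.ofReal_cos, Complex.ofReal_sin]

end NotContractibleAux

end NotContractibleAux

open NotContractibleAux Set Real in
theorem example_set_not_contractible :
    ¬ ContractibleSpace ({x : Fin 3 → ℝ | (∀ i, x i ∈ Set.Icc (-1 : ℝ) 1) ∧
      (∃ i, x i < 0) ∧ (∃ i, 0 ≤ x i)} : Set (Fin 3 → ℝ)) := by
  intro hcontr
  set A : Set (Fin 3 → ℝ) := {x : Fin 3 → ℝ | (∀ i, x i ∈ Set.Icc (-1 : ℝ) 1) ∧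
      (∃ i, x i < 0) ∧ (∃ i, 0 ≤ x i)} with hA
  obtain ⟨y, hy⟩ := id_nullhomotopic A
  obtain ⟨H⟩ := hy
  set Γ : ℝ → A := fun s => ⟨gam s, gam_mem s⟩ with hΓ
  have hΓc : Continuous Γ := gam_cont.subtype_mk _
  have hΓloop : Γ 1 = Γ 0 := Subtype.ext gam_loop
  set K : ℝ → ℝ → ℂ := fun t s => fc ((H (Set.projIcc 0 1 zero_le_one t, Γ s) : A) : Fin 3 → ℝ)
    with hK
  have hKc : Continuous fun p : ℝ × ℝ => K p.1 p.2 := by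
    apply fc_cont.comp
    apply continuous_subtype_val.comp
    apply H.continuous.comp
    exact ((continuous_projIcc.comp continuous_fst).prodMk (hΓc.comp continuous_snd))
  have hne : ∀ t s, K t s ≠ 0 := fun t s =>
    fc_ne_zero _ (H (Set.projIcc 0 1 zero_le_one t, Γ s)).2
  have hloop : ∀ t, K t 0 = K t 1 := by
    intro t
    rw [hK]
    simp only [hΓloop]
  have hproj1 : Set.projIcc (0:ℝ) 1 zero_le_one 1 = 1 := by
    rw [Set.projIcc_right]
    rfl
  have hproj0 : Set.projIcc (0:ℝ) 1 zero_le_one 0 = 0 := by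
    rw [Set.projIcc_left]
    rfl
  have hconst : ∀ s, K 1 s = K 1 0 := by
    intro s
    rw [hK]
    simp only [hproj1, H.apply_one, ContinuousMap.const_apply]
  have hK0 : ∀ s, K 0 s = fc (gam s) := by
    intro s
    rw [hK]
    simp only [hproj0, H.apply_zero, ContinuousMap.id_apply]
    rfl
  set L0 : ℝ → ℂ := fun s => ((2 * π * s : ℝ) : ℂ) * Complex.I with hL0def
  have hL0c : Continuous L0 := by
    apply Continuous.mul ?_ continuous_const
    exact Complex.continuous_ofReal.comp (by continuity)
  have hlift : ∀ s ∈ Icc (0:ℝ) 1, Complex.exp (L0 s) = K 0 s := by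
    intro s _
    rw [hK0 s, hL0def]
    exact exp_eq_gam s
  have := lift_closes_of_nullhomotopy K hKc hne hloop hconst L0 hL0c hlift
  rw [hL0def] at this
  simp only [mul_one, mul_zero] at this
  have h2 : ((2 * π : ℝ) : ℂ) * Complex.I = 0 := by
    simpa using this
  rw [mul_eq_zero] at h2
  rcases h2 with h2 | h2
  · rw [Complex.ofReal_eq_zero] at h2
    exact Real.pi_ne_zero (by linarith)
  · exact Complex.I_ne_zero h2
end

section
/- Let X ⊆ ℝ^n and let F : X → Set(ℝ^m) be a set-valued function whose graph {(x,y) : y ∈ F(x)} is open in X × ℝ^m and whose values F(x) are nonempty and monovex. Then F admits a continuous selection: there is a continuous function f : X → ℝ^m with f(x) ∈ F(x) for every x ∈ X. -/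
private lemma snoc_continuous (m : ℕ) :
    Continuous (fun p : (Fin m → ℝ) × ℝ => (Fin.snoc p.1 p.2 : Fin (m + 1) → ℝ)) := by
  refine continuous_pi fun i => ?_
  refine Fin.lastCases ?_ (fun j => ?_) i
  · simp only [Fin.snoc_last]
    exact continuous_snd
  · simp only [Fin.snoc_castSucc]
    exact (continuous_apply j).comp continuous_fst

/-- Main auxiliary lemma: selection theorem over any normal paracompact space,
proved by induction on the dimension `m`. -/
theorem monovex_selection_aux (Y : Type*) [TopologicalSpace Y] [NormalSpace Y]
    [ParacompactSpace Y] :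
    ∀ (m : ℕ) (F : Y → Set (Fin m → ℝ)),
      IsOpen {p : Y × (Fin m → ℝ) | p.2 ∈ F p.1} →
      (∀ y, (F y).Nonempty) → (∀ y, Monovex (F y)) →
      ∃ f : Y → (Fin m → ℝ), Continuous f ∧ ∀ y, f y ∈ F y := by
  intro m
  induction m with
  | zero =>
    intro F _ hne _
    refine ⟨fun _ => fun _ => 0, continuous_const, fun y => ?_⟩
    obtain ⟨v, hv⟩ := hne y
    exact (Subsingleton.elim v (fun _ => 0)) ▸ hv
  | succ m ih =>
    intro F hopen hne hmv
    set G : Y → Set (Fin m → ℝ) := fun y => Fin.init '' F y with hG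
    have hsnoc := snoc_continuous m
    -- the graph of G is open
    have hGgraph : {p : Y × (Fin m → ℝ) | p.2 ∈ G p.1} =
        ⋃ t : ℝ, {p : Y × (Fin m → ℝ) | (Fin.snoc p.2 t : Fin (m + 1) → ℝ) ∈ F p.1} := by
      ext ⟨y, w⟩
      simp only [Set.mem_setOf_eq, Set.mem_iUnion, hG, Set.mem_image]
      constructor
      · rintro ⟨v, hv, rfl⟩
        exact ⟨v (Fin.last m), by rwa [Fin.snoc_init_self]⟩
      · rintro ⟨t, ht⟩
        exact ⟨Fin.snoc w t, ht, by simp⟩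
    have hGopen : IsOpen {p : Y × (Fin m → ℝ) | p.2 ∈ G p.1} := by
      rw [hGgraph]
      refine isOpen_iUnion fun t => ?_
      exact hopen.preimage (continuous_fst.prodMk
        (hsnoc.comp (continuous_snd.prodMk continuous_const)))
    have hGne : ∀ y, (G y).Nonempty := fun y => (hne y).image _
    have hGmv : ∀ y, Monovex (G y) := by
      intro y w1 hw1 w2 hw2
      obtain ⟨v1, hv1, rfl⟩ := hw1
      obtain ⟨v2, hv2, rfl⟩ := hw2
      obtain ⟨γ, hγc, hγ0, hγ1, hγA, hγm⟩ := hmv y v1 hv1 v2 hv2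
      refine ⟨fun t => Fin.init (γ t), ?_, by simp only [hγ0], by simp only [hγ1],
        fun t => ⟨γ t, hγA t, rfl⟩, fun i => ?_⟩
      · exact continuous_pi fun i => (continuous_apply _).comp hγc
      · exact hγm i.castSucc
    obtain ⟨g, hgc, hgmem⟩ := ih G hGopen hGne hGmv
    -- the fiber over the selected base point
    set H : Y → Set ℝ := fun y => {t | (Fin.snoc (g y) t : Fin (m + 1) → ℝ) ∈ F y} with hH
    have hHne : ∀ y, (H y).Nonempty := by
      intro y
      obtain ⟨v, hv, hvi⟩ := hgmem y
      refine ⟨v (Fin.last m), ?_⟩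
      show (Fin.snoc (g y) (v (Fin.last m)) : Fin (m + 1) → ℝ) ∈ F y
      rw [← hvi, Fin.snoc_init_self]
      exact hv
    have hHconv : ∀ y, Convex ℝ (H y) := by
      intro y
      refine Set.OrdConnected.convex ⟨?_⟩
      intro t1 ht1 t2 ht2 s hs
      obtain ⟨γ, hγc, hγ0, hγ1, hγA, hγm⟩ := hmv y _ ht1 _ ht2
      have hconst : ∀ (j : Fin m) (t : unitInterval), γ t j.castSucc = g y j := by
        intro j t
        have h0 : γ 0 j.castSucc = g y j := by rw [hγ0]; simp
        have h1 : γ 1 j.castSucc = g y j := by rw [hγ1]; simp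
        have hle0 : (0 : unitInterval) ≤ t := unitInterval.nonneg'
        have hle1 : t ≤ 1 := unitInterval.le_one'
        rcases hγm j.castSucc with hm | hm
        · exact le_antisymm (h1 ▸ hm hle1) (h0 ▸ hm hle0)
        · exact le_antisymm (h0 ▸ hm hle0) (h1 ▸ hm hle1)
      set ψ : unitInterval → ℝ := fun t => γ t (Fin.last m) with hψ
      have hψc : Continuous ψ := (continuous_apply _).comp hγc
      have hψ0 : ψ 0 = t1 := by rw [hψ]; simp only; rw [hγ0]; simp
      have hψ1 : ψ 1 = t2 := by rw [hψ]; simp only; rw [hγ1]; simp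
      have hsmem : s ∈ Set.Icc (ψ 0) (ψ 1) := by rw [hψ0, hψ1]; exact hs
      obtain ⟨t0, ht0⟩ := intermediate_value_univ (0 : unitInterval) 1 hψc hsmem
      have hγt0 : γ t0 = (Fin.snoc (g y) s : Fin (m + 1) → ℝ) := by
        funext i
        refine Fin.lastCases ?_ (fun j => ?_) i
        · rw [Fin.snoc_last]; exact ht0
        · rw [Fin.snoc_castSucc]; exact hconst j t0
      show (Fin.snoc (g y) s : Fin (m + 1) → ℝ) ∈ F y
      rw [← hγt0]
      exact hγA t0
    have hHopen : IsOpen {p : Y × ℝ | p.2 ∈ H p.1} := by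
      have : {p : Y × ℝ | p.2 ∈ H p.1} =
          (fun p : Y × ℝ => (p.1, (Fin.snoc (g p.1) p.2 : Fin (m + 1) → ℝ))) ⁻¹'
            {q : Y × (Fin (m + 1) → ℝ) | q.2 ∈ F q.1} := rfl
      rw [this]
      exact hopen.preimage (continuous_fst.prodMk
        (hsnoc.comp ((hgc.comp continuous_fst).prodMk continuous_snd)))
    have hloc : ∀ y : Y, ∃ c : ℝ, ∀ᶠ z in nhds y, c ∈ H z := by
      intro y
      obtain ⟨c, hc⟩ := hHne y
      refine ⟨c, ?_⟩
      have : IsOpen {z : Y | c ∈ H z} :=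
        hHopen.preimage (Continuous.prodMk continuous_id continuous_const)
      exact this.eventually_mem hc
    obtain ⟨h, hh⟩ := exists_continuous_forall_mem_convex_of_local_const hHconv hloc
    exact ⟨fun y => Fin.snoc (g y) (h y), hsnoc.comp (hgc.prodMk h.continuous),
      fun y => hh y⟩

theorem monovex_michael_selection {n m : ℕ} (X : Set (Fin n → ℝ))
    (F : (Fin n → ℝ) → Set (Fin m → ℝ))
    (hopen : IsOpen {p : X × (Fin m → ℝ) | p.2 ∈ F p.1})
    (hval : ∀ x ∈ X, (F x).Nonempty ∧ Monovex (F x)) :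
    ∃ f : (Fin n → ℝ) → (Fin m → ℝ), ContinuousOn f X ∧ ∀ x ∈ X, f x ∈ F x := by
  classical
  obtain ⟨f0, hf0c, hf0mem⟩ := monovex_selection_aux X m (fun x : X => F x) hopen
    (fun y => (hval y y.2).1) (fun y => (hval y y.2).2)
  refine ⟨fun x => if hx : x ∈ X then f0 ⟨x, hx⟩ else 0, ?_, ?_⟩
  · rw [continuousOn_iff_continuous_restrict]
    convert hf0c using 1
    funext y
    simp [Set.restrict, y.2]
  · intro x hx
    simpa [hx] using hf0mem ⟨x, hx⟩
end

section
/- Let A ⊆ ℝ^n be a nonempty closed set and suppose g : ℝ^n → ℝ^n is a continuous function that is the identity on A and satisfies d_∞(g(x), x) ≤ (4/3)·d_∞(x, A) and d_∞(g(x), A) ≤ d_∞(x, A)/9 for all x ∈ ℝ^n. Then the iterates g^k converge locally uniformly to a continuous retraction h : ℝ^n → A (i.e., h is continuous, h(ℝ^n) ⊆ A, and h is the identity on A). -/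
theorem iterates_converge_to_retraction {n : ℕ} (A : Set (Fin n → ℝ))
    (hne : A.Nonempty) (hc : IsClosed A) (g : (Fin n → ℝ) → (Fin n → ℝ))
    (hg : Continuous g) (hid : ∀ x ∈ A, g x = x)
    (hnear : ∀ x, dist (g x) x ≤ (4 / 3) * Metric.infDist x A)
    (hcontract : ∀ x, Metric.infDist (g x) A ≤ Metric.infDist x A / 9) :
    ∃ h : (Fin n → ℝ) → (Fin n → ℝ), Continuous h ∧ (∀ x, h x ∈ A) ∧
      (∀ x ∈ A, h x = x) ∧
      TendstoLocallyUniformly (fun k x => g^[k] x) h Filter.atTop := by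
  have hr : (1 : ℝ) / 9 < 1 := by norm_num
  -- decay of infDist along iterates
  have hdecay : ∀ x k, Metric.infDist (g^[k] x) A ≤ Metric.infDist x A * (1 / 9) ^ k := by
    intro x k
    induction k with
    | zero => simp
    | succ k ih =>
      rw [Function.iterate_succ_apply']
      calc Metric.infDist (g (g^[k] x)) A ≤ Metric.infDist (g^[k] x) A / 9 := hcontract _
        _ ≤ Metric.infDist x A * (1 / 9) ^ k / 9 := by linarith
        _ = Metric.infDist x A * (1 / 9) ^ (k + 1) := by ring
  have hstep : ∀ x k, dist (g^[k] x) (g^[k + 1] x) ≤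
      (4 / 3 * Metric.infDist x A) * (1 / 9) ^ k := by
    intro x k
    rw [dist_comm, Function.iterate_succ_apply']
    calc dist (g (g^[k] x)) (g^[k] x) ≤ 4 / 3 * Metric.infDist (g^[k] x) A := hnear _
      _ ≤ 4 / 3 * (Metric.infDist x A * (1 / 9) ^ k) := by
          have := hdecay x k; nlinarith
      _ = (4 / 3 * Metric.infDist x A) * (1 / 9) ^ k := by ring
  have hcauchy : ∀ x : Fin n → ℝ, ∃ y, Filter.Tendsto (fun k => g^[k] x)
      Filter.atTop (nhds y) :=
    fun x => cauchySeq_tendsto_of_complete (cauchySeq_of_le_geometric _ _ hr (hstep x))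
  choose h hh using hcauchy
  -- rate of convergence to the limit
  have hrate : ∀ x k, dist (g^[k] x) (h x) ≤
      (4 / 3 * Metric.infDist x A) * (1 / 9) ^ k / (1 - 1 / 9) :=
    fun x k => dist_le_of_le_geometric_of_tendsto _ _ hr (hstep x) (hh x) k
  have hmem : ∀ x, h x ∈ A := by
    intro x
    rw [(hc.mem_iff_infDist_zero hne : h x ∈ A ↔ _)]
    have h1 : Filter.Tendsto (fun k => Metric.infDist (g^[k] x) A) Filter.atTop
        (nhds (Metric.infDist (h x) A)) :=
      ((Metric.continuous_infDist_pt A).tendsto _).comp (hh x)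
    have h2 : Filter.Tendsto (fun k => Metric.infDist (g^[k] x) A) Filter.atTop (nhds 0) := by
      apply squeeze_zero (fun k => Metric.infDist_nonneg) (hdecay x)
      simpa using tendsto_pow_atTop_nhds_zero_of_lt_one (by norm_num) hr
        |>.const_mul (Metric.infDist x A)
    exact tendsto_nhds_unique h1 h2
  have hfix : ∀ x ∈ A, h x = x := by
    intro x hx
    have : ∀ k, g^[k] x = x := by
      intro k
      induction k with
      | zero => rfl
      | succ k ih => rw [Function.iterate_succ_apply', ih, hid x hx]
    have h1 : Filter.Tendsto (fun _ : ℕ => x) Filter.atTop (nhds (h x)) :=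
      (funext this : (fun k => g^[k] x) = fun _ => x) ▸ hh x
    exact tendsto_nhds_unique h1 tendsto_const_nhds
  have hlu : TendstoLocallyUniformly (fun k x => g^[k] x) h Filter.atTop := by
    rw [tendstoLocallyUniformly_iff_forall_isCompact]
    intro K hK
    rcases K.eq_empty_or_nonempty with rfl | hKne
    · simp [TendstoUniformlyOn]
    obtain ⟨M, hM⟩ : ∃ M, ∀ x ∈ K, Metric.infDist x A ≤ M := by
      obtain ⟨z, hz, hzmax⟩ := hK.exists_isMaxOn hKne
        (Metric.continuous_infDist_pt A).continuousOn
      exact ⟨Metric.infDist z A, hzmax⟩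
    rw [Metric.tendstoUniformlyOn_iff]
    intro ε hε
    have hM0 : 0 ≤ M := le_trans Metric.infDist_nonneg (hM _ hKne.choose_spec)
    have htend : Filter.Tendsto
        (fun k : ℕ => (4 / 3 * M) * (1 / 9) ^ k / (1 - 1 / 9)) Filter.atTop (nhds 0) := by
      have := (tendsto_pow_atTop_nhds_zero_of_lt_one (by norm_num : (0:ℝ) ≤ 1/9) hr).const_mul
        (4 / 3 * M)
      simpa using this.div_const (1 - 1 / 9)
    filter_upwards [htend.eventually (gt_mem_nhds hε)] with k hk x hx
    have hb := hrate x k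
    have hpow : (0:ℝ) ≤ (1 / 9 : ℝ) ^ k := by positivity
    have hMx := hM x hx
    rw [dist_comm]
    calc dist (g^[k] x) (h x) ≤ (4 / 3 * Metric.infDist x A) * (1 / 9) ^ k / (1 - 1 / 9) := hb
      _ ≤ (4 / 3 * M) * (1 / 9) ^ k / (1 - 1 / 9) := by
          apply div_le_div_of_nonneg_right ?_ (by norm_num) |>.trans_eq rfl
          nlinarith
      _ < ε := hk
  exact ⟨h, hlu.continuous (Filter.Eventually.of_forall fun k =>
    hg.iterate k).frequently, hmem, hfix, hlu⟩
end

section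
/- The set A = {(0,0)} ∪ ⋃_{k=0}^∞ [1/2^{k+1}, 1/2^k]² ⊆ ℝ² is monovex. -/
namespace SqAux

noncomputable section

/-- The set in question. -/
def A : Set (Fin 2 → ℝ) :=
  {(![0,0] : Fin 2 → ℝ)} ∪
    ⋃ k : ℕ, Set.pi Set.univ fun _ : Fin 2 =>
      Set.Icc ((1 : ℝ) / 2 ^ (k + 1)) (1 / 2 ^ k)

lemma mem_sq {k : ℕ} {x : Fin 2 → ℝ}
    (h : ∀ i, x i ∈ Set.Icc ((1:ℝ)/2^(k+1)) (1/2^k)) : x ∈ A :=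
  Or.inr (Set.mem_iUnion.2 ⟨k, fun i _ => h i⟩)

lemma eq_zero_of_singleton {x : Fin 2 → ℝ} (h0 : x 0 = 0) (h1 : x 1 = 0) :
    x = ![0,0] := by
  funext i
  fin_cases i <;> simp [h0, h1]

lemma coord_bounds {x : Fin 2 → ℝ} (hx : x ∈ A) (i : Fin 2) : 0 ≤ x i ∧ x i ≤ 1 := by
  rcases hx with hx | hx
  · have hx' : x = ![0,0] := hx
    subst hx'
    fin_cases i <;> norm_num
  · rcases Set.mem_iUnion.1 hx with ⟨k, hk⟩
    have h := hk i (Set.mem_univ i)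
    have h2 : (1:ℝ)/2^k ≤ 1 := by
      rw [div_le_one (by positivity)]
      exact one_le_pow₀ (by norm_num)
    constructor
    · have : (0:ℝ) ≤ 1/2^(k+1) := by positivity
      linarith [h.1]
    · linarith [h.2]

/-- Points between `x` and the diagonal point `(max, max)` lie in `A`. -/
lemma between_max {x v : Fin 2 → ℝ} (hx : x ∈ A)
    (hv : ∀ i, x i ≤ v i ∧ v i ≤ max (x 0) (x 1)) : v ∈ A := by
  rcases hx with hx | hx
  · have hx' : x = ![0,0] := hx
    left
    have h0 : x 0 = 0 := by rw [hx']; norm_num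
    have h1 : x 1 = 0 := by rw [hx']; norm_num
    have hm : max (x 0) (x 1) = 0 := by rw [h0, h1]; simp
    refine eq_zero_of_singleton ?_ ?_
    · have := hv 0; rw [hm, h0] at this; linarith [this.1, this.2]
    · have := hv 1; rw [hm, h1] at this; linarith [this.1, this.2]
  · rcases Set.mem_iUnion.1 hx with ⟨k, hk⟩
    apply mem_sq (k := k)
    intro i
    have hi := hk i (Set.mem_univ i)
    have h0 := hk 0 (Set.mem_univ 0)
    have h1 := hk 1 (Set.mem_univ 1)
    exact ⟨le_trans hi.1 (hv i).1, le_trans (hv i).2 (max_le h0.2 h1.2)⟩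

/-- Points between the diagonal point `(min, min)` and `y` lie in `A`. -/
lemma between_min {y v : Fin 2 → ℝ} (hy : y ∈ A)
    (hv : ∀ i, min (y 0) (y 1) ≤ v i ∧ v i ≤ y i) : v ∈ A := by
  rcases hy with hy | hy
  · have hy' : y = ![0,0] := hy
    left
    have h0 : y 0 = 0 := by rw [hy']; norm_num
    have h1 : y 1 = 0 := by rw [hy']; norm_num
    have hm : min (y 0) (y 1) = 0 := by rw [h0, h1]; simp
    refine eq_zero_of_singleton ?_ ?_
    · have := hv 0; rw [hm, h0] at this; linarith [this.1, this.2]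
    · have := hv 1; rw [hm, h1] at this; linarith [this.1, this.2]
  · rcases Set.mem_iUnion.1 hy with ⟨k, hk⟩
    apply mem_sq (k := k)
    intro i
    have hi := hk i (Set.mem_univ i)
    have h0 := hk 0 (Set.mem_univ 0)
    have h1 := hk 1 (Set.mem_univ 1)
    exact ⟨le_trans (le_min h0.1 h1.1) (hv i).1, le_trans (hv i).2 hi.2⟩

/-- Diagonal points lie in `A`. -/
lemma diag_mem {v : Fin 2 → ℝ} (hv : v 1 = v 0) (h0 : 0 ≤ v 0) (h1 : v 0 ≤ 1) :
    v ∈ A := by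
  rcases eq_or_lt_of_le h0 with h | h
  · exact Or.inl (eq_zero_of_singleton h.symm (by rw [hv]; exact h.symm))
  · have hex : ∃ n : ℕ, (1/2:ℝ)^n < v 0 := exists_pow_lt_of_lt_one h (by norm_num)
    set n := Nat.find hex with hn
    have hspec : (1/2:ℝ)^n < v 0 := Nat.find_spec hex
    have hnpos : n ≠ 0 := by
      intro h0'
      rw [h0', pow_zero] at hspec
      linarith
    have hmin : ¬ (1/2:ℝ)^(n-1) < v 0 := Nat.find_min hex (Nat.pred_lt hnpos)
    push_neg at hmin
    apply mem_sq (k := n - 1)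
    have hnn : n - 1 + 1 = n := Nat.succ_pred_eq_of_ne_zero hnpos
    intro i
    have hvi : v i = v 0 := by fin_cases i <;> simp [hv]
    rw [hvi]
    constructor
    · rw [hnn]
      calc (1:ℝ)/2^n = (1/2)^n := by rw [div_pow, one_pow]
      _ ≤ v 0 := hspec.le
    · calc v 0 ≤ (1/2:ℝ)^(n-1) := hmin
      _ = 1/2^(n-1) := by rw [div_pow, one_pow]

/-- clamp to `[0,1]` -/
def c (r : ℝ) : ℝ := min 1 (max 0 r)

lemma c_mono : Monotone c := fun _ _ h => min_le_min le_rfl (max_le_max le_rfl h)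

lemma c_cont : Continuous c := continuous_const.min (continuous_const.max continuous_id)

lemma c_nonneg (r : ℝ) : 0 ≤ c r := le_min one_pos.le (le_max_left _ _)

lemma c_le_one (r : ℝ) : c r ≤ 1 := min_le_left _ _

lemma c_of_nonpos {r : ℝ} (h : r ≤ 0) : c r = 0 := by
  unfold c
  rw [max_eq_left h, min_eq_right one_pos.le]

lemma c_of_one_le {r : ℝ} (h : 1 ≤ r) : c r = 1 := by
  unfold c
  rw [max_eq_right (by linarith), min_eq_left h]

/-- The monotone path from `x` up to `y`, when `x` lies entirely below `y`. -/
lemma up {x y : Fin 2 → ℝ} (hx : x ∈ A) (hy : y ∈ A)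
    (hab : max (x 0) (x 1) ≤ min (y 0) (y 1)) :
    ∃ γ : unitInterval → Fin 2 → ℝ,
      Continuous γ ∧ γ 0 = x ∧ γ 1 = y ∧ (∀ t, γ t ∈ A) ∧
      ∀ i, Monotone (fun t => γ t i) ∨ Antitone (fun t => γ t i) := by
  set a := max (x 0) (x 1) with ha
  set b := min (y 0) (y 1) with hb
  have hxa : ∀ i, x i ≤ a := by
    intro i; fin_cases i
    · exact le_max_left _ _
    · exact le_max_right _ _
  have hby : ∀ i, b ≤ y i := by
    intro i; fin_cases i
    · exact min_le_left _ _
    · exact min_le_right _ _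
  have ha0 : 0 ≤ a := le_trans (coord_bounds hx 0).1 (hxa 0)
  have hb1 : b ≤ 1 := le_trans (hby 0) (coord_bounds hy 0).2
  refine ⟨fun t i =>
    x i + (a - x i) * c (3*(t:ℝ)) + (b - a) * c (3*(t:ℝ) - 1) + (y i - b) * c (3*(t:ℝ) - 2),
    ?_, ?_, ?_, ?_, ?_⟩
  · apply continuous_pi
    intro i
    have hc : Continuous fun t : unitInterval => (t : ℝ) := continuous_subtype_val
    exact ((continuous_const.add
        (continuous_const.mul (c_cont.comp (by fun_prop)))).add
        (continuous_const.mul (c_cont.comp (by fun_prop)))).add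
        (continuous_const.mul (c_cont.comp (by fun_prop)))
  · funext i
    show x i + (a - x i) * c (3*(0:ℝ)) + (b - a) * c (3*(0:ℝ) - 1)
        + (y i - b) * c (3*(0:ℝ) - 2) = x i
    rw [c_of_nonpos (by norm_num : (3:ℝ)*0 ≤ 0),
      c_of_nonpos (by norm_num : (3:ℝ)*0 - 1 ≤ 0), c_of_nonpos (by norm_num : (3:ℝ)*0 - 2 ≤ 0)]
    ring
  · funext i
    show x i + (a - x i) * c (3*(1:ℝ)) + (b - a) * c (3*(1:ℝ) - 1)
        + (y i - b) * c (3*(1:ℝ) - 2) = y i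
    rw [c_of_one_le (by norm_num : (1:ℝ) ≤ 3*1),
      c_of_one_le (by norm_num : (1:ℝ) ≤ 3*1 - 1), c_of_one_le (by norm_num : (1:ℝ) ≤ 3*1 - 2)]
    ring
  · intro t
    dsimp only
    have ht0 : (0:ℝ) ≤ t := t.2.1
    have ht1 : (t:ℝ) ≤ 1 := t.2.2
    by_cases h1 : 3*(t:ℝ) ≤ 1
    · apply between_max hx
      intro i
      rw [c_of_nonpos (by linarith : 3*(t:ℝ) - 1 ≤ 0), c_of_nonpos (by linarith : 3*(t:ℝ) - 2 ≤ 0)]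
      have hcn := c_nonneg (3*(t:ℝ))
      have hcl := c_le_one (3*(t:ℝ))
      constructor
      · nlinarith [hxa i]
      · nlinarith [hxa i]
    · push_neg at h1
      by_cases h2 : 3*(t:ℝ) ≤ 2
      · have e1 : c (3*(t:ℝ)) = 1 := c_of_one_le (by linarith)
        have e3 : c (3*(t:ℝ) - 2) = 0 := c_of_nonpos (by linarith)
        apply diag_mem
        · rw [e1, e3]; ring
        all_goals
          rw [e1, e3]
          have hcn := c_nonneg (3*(t:ℝ) - 1)
          have hcl := c_le_one (3*(t:ℝ) - 1)
          have h01 := hxa 0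
          have h02 := hby 0
          nlinarith [le_trans (hxa 0) hab]
      · push_neg at h2
        apply between_min hy
        intro i
        rw [c_of_one_le (by linarith : (1:ℝ) ≤ 3*(t:ℝ)),
          c_of_one_le (by linarith : (1:ℝ) ≤ 3*(t:ℝ) - 1)]
        have hcn := c_nonneg (3*(t:ℝ) - 2)
        have hcl := c_le_one (3*(t:ℝ) - 2)
        constructor
        · nlinarith [hby i]
        · nlinarith [hby i]
  · intro i
    left
    have hmono : Monotone fun t : unitInterval => (t:ℝ) := fun _ _ h => h
    have hab' : a ≤ b := hab
    have m1 : Monotone fun t : unitInterval => c (3*(t:ℝ)) :=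
      c_mono.comp (fun u v h => by have : (u:ℝ) ≤ v := h; linarith)
    have m2 : Monotone fun t : unitInterval => c (3*(t:ℝ) - 1) :=
      c_mono.comp (fun u v h => by have : (u:ℝ) ≤ v := h; linarith)
    have m3 : Monotone fun t : unitInterval => c (3*(t:ℝ) - 2) :=
      c_mono.comp (fun u v h => by have : (u:ℝ) ≤ v := h; linarith)
    have c1 : 0 ≤ a - x i := by linarith [hxa i]
    have c2 : 0 ≤ b - a := by linarith
    have c3 : 0 ≤ y i - b := by linarith [hby i]
    exact ((monotone_const.add (m1.const_mul c1)).add (m2.const_mul c2)).add (m3.const_mul c3)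

/-- Reverse a path. -/
lemma rev {x y : Fin 2 → ℝ}
    (h : ∃ γ : unitInterval → Fin 2 → ℝ,
      Continuous γ ∧ γ 0 = y ∧ γ 1 = x ∧ (∀ t, γ t ∈ A) ∧
      ∀ i, Monotone (fun t => γ t i) ∨ Antitone (fun t => γ t i)) :
    ∃ γ : unitInterval → Fin 2 → ℝ,
      Continuous γ ∧ γ 0 = x ∧ γ 1 = y ∧ (∀ t, γ t ∈ A) ∧
      ∀ i, Monotone (fun t => γ t i) ∨ Antitone (fun t => γ t i) := by
  obtain ⟨γ, hc, h0, h1, hm, hmono⟩ := h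
  have hanti : Antitone unitInterval.symm := by
    intro u v huv
    show (1:ℝ) - v ≤ 1 - u
    have : (u:ℝ) ≤ v := huv
    linarith
  refine ⟨fun t => γ (unitInterval.symm t), hc.comp unitInterval.continuous_symm,
    by show γ (unitInterval.symm 0) = x; rw [unitInterval.symm_zero, h1],
    by show γ (unitInterval.symm 1) = y; rw [unitInterval.symm_one, h0],
    fun t => hm _, fun i => ?_⟩
  rcases hmono i with hi | hi
  · exact Or.inr (fun u v huv => hi (hanti huv))
  · exact Or.inl (fun u v huv => hi (hanti huv))

/-- Linear path inside one square. -/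
lemma same_sq {k : ℕ} {x y : Fin 2 → ℝ}
    (hx : ∀ i, x i ∈ Set.Icc ((1:ℝ)/2^(k+1)) (1/2^k))
    (hy : ∀ i, y i ∈ Set.Icc ((1:ℝ)/2^(k+1)) (1/2^k)) :
    ∃ γ : unitInterval → Fin 2 → ℝ,
      Continuous γ ∧ γ 0 = x ∧ γ 1 = y ∧ (∀ t, γ t ∈ A) ∧
      ∀ i, Monotone (fun t => γ t i) ∨ Antitone (fun t => γ t i) := by
  refine ⟨fun t i => x i + (y i - x i) * (t:ℝ), ?_, ?_, ?_, ?_, ?_⟩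
  · apply continuous_pi
    intro i
    have hc : Continuous fun t : unitInterval => (t : ℝ) := continuous_subtype_val
    exact continuous_const.add (continuous_const.mul hc)
  · funext i; show x i + (y i - x i) * ((0:unitInterval):ℝ) = x i
    show x i + (y i - x i) * 0 = x i; ring
  · funext i; show x i + (y i - x i) * ((1:unitInterval):ℝ) = y i
    show x i + (y i - x i) * 1 = y i; ring
  · intro t
    apply mem_sq (k := k)
    intro i
    dsimp only
    have ht0 : (0:ℝ) ≤ t := t.2.1
    have ht1 : (t:ℝ) ≤ 1 := t.2.2
    have hxi := hx i
    have hyi := hy i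
    constructor
    · nlinarith [hxi.1, hyi.1]
    · nlinarith [hxi.2, hyi.2]
  · intro i
    rcases le_total (x i) (y i) with h | h
    · left
      intro u v huv
      have huv' : (u:ℝ) ≤ v := huv
      show x i + (y i - x i) * (u:ℝ) ≤ x i + (y i - x i) * (v:ℝ)
      nlinarith
    · right
      intro u v huv
      have huv' : (u:ℝ) ≤ v := huv
      show x i + (y i - x i) * (v:ℝ) ≤ x i + (y i - x i) * (u:ℝ)
      nlinarith

end

end SqAux

theorem squares_set_monovex :
    Monovex ({(![0,0] : Fin 2 → ℝ)} ∪
      ⋃ k : ℕ, Set.pi Set.univ fun _ : Fin 2 =>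
        Set.Icc ((1 : ℝ) / 2 ^ (k + 1)) (1 / 2 ^ k)) := by
  intro x hx y hy
  have hx' : x ∈ SqAux.A := hx
  have hy' : y ∈ SqAux.A := hy
  show ∃ γ : unitInterval → Fin 2 → ℝ,
      Continuous γ ∧ γ 0 = x ∧ γ 1 = y ∧ (∀ t, γ t ∈ SqAux.A) ∧
      ∀ i, Monotone (fun t => γ t i) ∨ Antitone (fun t => γ t i)
  rcases hx' with hx0 | hxU
  · -- x = 0
    apply SqAux.up (Or.inl hx0) hy'
    have h0 : x 0 = 0 := by rw [show x = ![0,0] from hx0]; norm_num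
    have h1 : x 1 = 0 := by rw [show x = ![0,0] from hx0]; norm_num
    rw [h0, h1]
    simp only [max_self]
    exact le_min (SqAux.coord_bounds hy' 0).1 (SqAux.coord_bounds hy' 1).1
  · rcases hy' with hy0 | hyU
    · -- y = 0
      apply SqAux.rev
      apply SqAux.up (Or.inl hy0) (Or.inr hxU)
      have h0 : y 0 = 0 := by rw [show y = ![0,0] from hy0]; norm_num
      have h1 : y 1 = 0 := by rw [show y = ![0,0] from hy0]; norm_num
      rw [h0, h1]
      simp only [max_self]
      have hx' : x ∈ SqAux.A := Or.inr hxU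
      exact le_min (SqAux.coord_bounds hx' 0).1 (SqAux.coord_bounds hx' 1).1
    · rcases Set.mem_iUnion.1 hxU with ⟨k, hk⟩
      rcases Set.mem_iUnion.1 hyU with ⟨m, hm⟩
      have hkk : ∀ i, x i ∈ Set.Icc ((1:ℝ)/2^(k+1)) (1/2^k) := fun i => hk i (Set.mem_univ i)
      have hmm : ∀ i, y i ∈ Set.Icc ((1:ℝ)/2^(m+1)) (1/2^m) := fun i => hm i (Set.mem_univ i)
      have key : ∀ p q : ℕ, p < q → ((1:ℝ)/2^q ≤ 1/2^(p+1)) := by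
        intro p q hpq
        apply one_div_le_one_div_of_le (by positivity)
        exact pow_le_pow_right₀ (by norm_num) hpq
      rcases Nat.lt_trichotomy k m with hlt | heq | hgt
      · -- k < m : y below x
        apply SqAux.rev
        apply SqAux.up (Or.inr hyU) (Or.inr hxU)
        apply max_le <;> apply le_min <;>
        · refine le_trans (le_trans ?_ (key k m hlt)) ?_
          · exact (hmm _).2
          · exact (hkk _).1
      · subst heq
        exact SqAux.same_sq hkk hmm
      · -- m < k : x below y
        apply SqAux.up (Or.inr hxU) (Or.inr hyU)
        apply max_le <;> apply le_min <;>
        · refine le_trans (le_trans ?_ (key m k hgt)) ?_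
          · exact (hkk _).2
          · exact (hmm _).1
end
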